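/- arXiv:2101.01365 — 8 statements merged into one kernel-verified Lean document; each statement's English description precedes it below -/
import Mathlib

section
/- Let n > 0 with consecutive-ones binary expansion exponents β_1 > ... > β_r ≥ 0 and partial sums n_k (with n_{r+1}=0). Fix k with β := β_k > 0, and let 1 ≤ s ≤ n satisfy n − s ≥ n_{k+1}. Then there exists an integer x with s ≤ x ≤ 2n − s and x ≡ 2^β (mod 2^{β+1}). -/
/-- An alternating binary expansion of `n`: `n = ∑ i ∈ range r, (-1)^i * 2^(β i)`
with strictly decreasing nonnegative exponents `β 0 > β 1 > ⋯ > β (r-1) ≥ 0`. -/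
def IsAltExpansion (n r : ℕ) (β : ℕ → ℕ) : Prop :=
  (∀ i j : ℕ, i < j → j < r → β j < β i) ∧
  (n : ℤ) = ∑ i ∈ Finset.range r, (-1 : ℤ) ^ i * 2 ^ (β i)

/-- The consecutive-ones binary expansion: an alternating expansion of minimal length `r`. -/
def IsConsOnesExpansion (n r : ℕ) (β : ℕ → ℕ) : Prop :=
  IsAltExpansion n r β ∧ ∀ r' β', IsAltExpansion n r' β' → r ≤ r'

private lemma consOnes_step (r : ℕ) (β : ℕ → ℕ) (j : ℕ) (hj : j < r) :
    ∑ i ∈ Finset.Ico j r, (-1:ℤ)^(i-j) * 2^(β i)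
      = 2^(β j) - ∑ i ∈ Finset.Ico (j+1) r, (-1:ℤ)^(i-(j+1)) * 2^(β i) := by
  rw [Finset.sum_eq_sum_Ico_succ_bot hj]
  have h1 : ∑ i ∈ Finset.Ico (j+1) r, (-1:ℤ)^(i-j) * 2^(β i)
      = ∑ i ∈ Finset.Ico (j+1) r, -((-1:ℤ)^(i-(j+1)) * 2^(β i)) := by
    refine Finset.sum_congr rfl fun i hi => ?_
    have h1 : j + 1 ≤ i := (Finset.mem_Ico.mp hi).1
    have h2 : i - j = (i - (j+1)) + 1 := by omega
    rw [h2, pow_succ]; ring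
  rw [h1, Finset.sum_neg_distrib]
  simp only [Nat.sub_self, pow_zero, one_mul, sub_eq_add_neg]

private lemma consOnes_bounds (r : ℕ) (β : ℕ → ℕ)
    (hmono : ∀ i j : ℕ, i < j → j < r → β j < β i) :
    ∀ m j, j + m = r →
      0 ≤ ∑ i ∈ Finset.Ico j r, (-1:ℤ)^(i-j) * 2^(β i) ∧
      ∑ i ∈ Finset.Ico j r, (-1:ℤ)^(i-j) * 2^(β i) ≤ 2^(β j) := by
  intro m
  induction m with
  | zero =>
    intro j hj
    have : j = r := by omega
    subst this
    simp [Finset.Ico_self]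
    try positivity
  | succ m ih =>
    intro j hj
    have hjr : j < r := by omega
    have hstep := consOnes_step r β j hjr
    have hIH := ih (j+1) (by omega)
    rcases hIH with ⟨h0, h1⟩
    have hle : ∑ i ∈ Finset.Ico (j+1) r, (-1:ℤ)^(i-(j+1)) * 2^(β i) ≤ 2^(β j) := by
      rcases Nat.lt_or_ge (j+1) r with hlt | hge
      · have : β (j+1) < β j := hmono j (j+1) (by omega) hlt
        calc _ ≤ (2:ℤ)^(β (j+1)) := h1
          _ ≤ 2^(β j) := by
            apply pow_le_pow_right₀ (by norm_num) (by omega)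
      · have : j + 1 = r := by omega
        rw [this] at h0 h1 ⊢
        simpa [Finset.Ico_self] using (by positivity : (0:ℤ) ≤ 2^(β j))
    constructor
    · rw [hstep]; linarith
    · rw [hstep]; linarith

/-- Lemma `mod2b1calc`: if `β = β_k > 0` and `1 ≤ s ≤ n` with `n - s ≥ n_{k+1}`,
then some `x` with `s ≤ x ≤ 2n - s` satisfies `x ≡ 2^β (mod 2^{β+1})`. -/
theorem consOnes_mod_two_pow_exists (n r : ℕ) (β : ℕ → ℕ) (hn : 0 < n)
    (h : IsConsOnesExpansion n r β) (nk : ℕ → ℤ)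
    (hnk : ∀ k, nk k = ∑ i ∈ Finset.Ico k r, (-1 : ℤ) ^ (i - k) * 2 ^ (β i))
    (k : ℕ) (hk : k < r) (hβ : 0 < β k)
    (s : ℕ) (hs1 : 1 ≤ s) (hs2 : s ≤ n) (hns : (n : ℤ) - s ≥ nk (k + 1)) :
    ∃ x : ℤ, (s : ℤ) ≤ x ∧ x ≤ 2 * n - s ∧ x ≡ 2 ^ (β k) [ZMOD (2 ^ (β k + 1))] := by
  obtain ⟨⟨hmono, hsum⟩, -⟩ := h
  -- nonnegativity of nk (k+1)
  have hnk1 : 0 ≤ nk (k+1) := by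
    rw [hnk]
    rcases Nat.lt_or_ge (k+1) r with hlt | hge
    · exact (consOnes_bounds r β hmono (r - (k+1)) (k+1) (by omega)).1
    · rw [Finset.Ico_eq_empty (by omega)]
      simp
  -- nk k = 2^(β k) - nk (k+1)
  have hrec : nk k = 2^(β k) - nk (k+1) := by
    rw [hnk, hnk]; exact consOnes_step r β k hk
  -- split n = A + (-1)^k * nk k
  set A : ℤ := ∑ i ∈ Finset.range k, (-1:ℤ)^i * 2^(β i) with hA
  have hsplit : (n : ℤ) = A + (-1)^k * nk k := by
    rw [hnk, hsum, Finset.range_eq_Ico,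
      ← Finset.sum_Ico_consecutive _ (Nat.zero_le k) (le_of_lt hk),
      ← Finset.range_eq_Ico, Finset.mul_sum]
    congr 1
    refine Finset.sum_congr rfl fun i hi => ?_
    have hki : k ≤ i := (Finset.mem_Ico.mp hi).1
    have : (-1:ℤ)^k * ((-1:ℤ)^(i-k) * 2^(β i)) = (-1:ℤ)^(k + (i-k)) * 2^(β i) := by
      rw [pow_add]; ring
    rw [this, Nat.add_sub_cancel' hki]
  -- divisibility of A
  have hdvdA : (2:ℤ)^(β k + 1) ∣ A := by
    apply Finset.dvd_sum
    intro i hi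
    have hik : i < k := Finset.mem_range.mp hi
    have : β k + 1 ≤ β i := hmono i k hik hk
    exact Dvd.dvd.mul_left (pow_dvd_pow 2 this) _
  refine ⟨(n : ℤ) + (-1)^k * nk (k+1), ?_, ?_, ?_⟩
  · rcases Nat.even_or_odd k with he | ho
    · rw [he.neg_one_pow]; push_cast; nlinarith
    · rw [ho.neg_one_pow]; linarith
  · rcases Nat.even_or_odd k with he | ho
    · rw [he.neg_one_pow]; linarith
    · rw [ho.neg_one_pow]; push_cast; nlinarith
  · have hx : (n : ℤ) + (-1)^k * nk (k+1) = A + (-1)^k * 2^(β k) := by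
      rw [hsplit, hrec]; ring
    rw [hx]
    apply Int.ModEq.symm
    rw [Int.modEq_iff_dvd]
    rcases Nat.even_or_odd k with he | ho
    · rw [he.neg_one_pow]
      have : A + 1 * 2^(β k) - 2^(β k) = A := by ring
      rw [this]; exact hdvdA
    · rw [ho.neg_one_pow]
      have : A + (-1) * 2^(β k) - 2^(β k) = A - 2^(β k + 1) := by rw [pow_succ]; ring
      rw [this]
      exact dvd_sub hdvdA dvd_rfl
end

section
/- Let n > 0 with consecutive-ones binary expansion exponents β_1 > ... > β_r ≥ 0 and partial sums n_k (n_{r+1}=0). Fix k with β := β_k > 0 and let 1 ≤ s ≤ n satisfy n − s ≥ n_{k+1}. Then there exists an integer j_0 ≥ 0 such that s ≤ ⌊s/2⌋ + 2^{β−1} + j_0·2^β ≤ n and s ≤ ⌈s/2⌉ + 2^{β−1} + j_0·2^β ≤ n. -/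
private lemma aux_j0 (n s c a H : ℤ) (hH : 1 ≤ H)
    (hc1 : s ≤ 2 * c) (hc2 : 2 * c ≤ s + 1) (hs : 1 ≤ s) (hsn : s ≤ n)
    (ha : 0 ≤ a) (hns : a ≤ n - s)
    (hcong : (4 * H) ∣ (n - (2 * H - a)) ∨ (4 * H) ∣ (n + (2 * H - a))) :
    ∃ j : ℤ, 0 ≤ j ∧ c ≤ H + j * (2 * H) ∧ c + H + j * (2 * H) ≤ n := by
  by_contra hcon
  push_neg at hcon
  have hB : (0 : ℤ) < 2 * H := by linarith
  set q : ℤ := (n - c + H) / (2 * H) with hqdef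
  have hde := Int.mul_ediv_add_emod (n - c + H) (2 * H)
  have h0 : 0 ≤ (n - c + H) % (2 * H) := Int.emod_nonneg _ (by linarith)
  have hlt : (n - c + H) % (2 * H) < 2 * H := Int.emod_lt_of_pos _ hB
  have hde' : 2 * H * q + (n - c + H) % (2 * H) = n - c + H := by rw [hqdef]; exact hde
  have hq1 : 2 * H * q ≤ n - c + H := by linarith
  have hq2 : n - c + H < 2 * H * q + 2 * H := by linarith
  have hcn : c ≤ n := by linarith
  have hc0 : 1 ≤ c := by linarith
  have hq0 : 0 ≤ q := by
    rcases le_or_gt 0 q with h | h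
    · exact h
    · exfalso
      have hq' : q ≤ -1 := by omega
      have : 2 * H * q ≤ 2 * H * (-1) := by
        exact mul_le_mul_of_nonneg_left hq' (by linarith)
      linarith
  have hlow : (2 * q - 1) * H + 1 ≤ c := by
    rcases eq_or_lt_of_le hq0 with h0' | h0'
    · have he : (2 * q - 1) * H = -H := by rw [← h0']; ring
      linarith
    · have hq1' : (0 : ℤ) ≤ q - 1 := by omega
      have h1 := hcon (q - 1) hq1'
      have h2 : c + H + (q - 1) * (2 * H) ≤ n := by nlinarith
      have h3 : ¬(c ≤ H + (q - 1) * (2 * H)) := fun hle => absurd h2 (not_le.mpr (h1 hle))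
      push_neg at h3
      have h4 : H + (q - 1) * (2 * H) + 1 ≤ c := Int.lt_iff_add_one_le.mp h3
      nlinarith
  have hL : (2 * q - 1) * (2 * H) + a + 1 ≤ n := by nlinarith
  have hq2' : n - c + H + 1 ≤ 2 * H * q + 2 * H := Int.lt_iff_add_one_le.mp hq2
  have hU : n ≤ (2 * q + 1) * (2 * H) - a - 1 := by nlinarith
  rcases hcong with ⟨M, hM⟩ | ⟨M, hM⟩
  · -- n = 4HM + 2H - a
    have h1 : 4 * H * (q - 1) < 4 * H * M := by nlinarith
    have h2 : 4 * H * M < 4 * H * q := by nlinarith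
    have hMq1 : q - 1 < M := lt_of_mul_lt_mul_left h1 (by linarith)
    have hMq2 : M < q := lt_of_mul_lt_mul_left h2 (by linarith)
    omega
  · -- n = 4HM - 2H + a
    have h1 : 4 * H * q < 4 * H * M := by nlinarith
    have h2 : 4 * H * M < 4 * H * (q + 1) := by nlinarith
    have hMq1 : q < M := lt_of_mul_lt_mul_left h1 (by linarith)
    have hMq2 : M < q + 1 := lt_of_mul_lt_mul_left h2 (by linarith)
    omega

/-- Lemma `j0lemma`: if `β = β_k > 0` and `1 ≤ s ≤ n` with `n - s ≥ n_{k+1}`, there is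
`j₀ ≥ 0` with `s ≤ ⌊s/2⌋ + 2^{β-1} + j₀2^β ≤ n` and `s ≤ ⌈s/2⌉ + 2^{β-1} + j₀2^β ≤ n`. -/
theorem consOnes_j0_exists (n r : ℕ) (β : ℕ → ℕ) (hn : 0 < n)
    (h : IsConsOnesExpansion n r β) (nk : ℕ → ℤ)
    (hnk : ∀ k, nk k = ∑ i ∈ Finset.Ico k r, (-1 : ℤ) ^ (i - k) * 2 ^ (β i))
    (k : ℕ) (hk : k < r) (hβ : 0 < β k)
    (s : ℕ) (hs1 : 1 ≤ s) (hs2 : s ≤ n) (hns : (n : ℤ) - s ≥ nk (k + 1)) :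
    ∃ j₀ : ℕ,
      (s ≤ s / 2 + 2 ^ (β k - 1) + j₀ * 2 ^ (β k) ∧
        s / 2 + 2 ^ (β k - 1) + j₀ * 2 ^ (β k) ≤ n) ∧
      (s ≤ (s + 1) / 2 + 2 ^ (β k - 1) + j₀ * 2 ^ (β k) ∧
        (s + 1) / 2 + 2 ^ (β k - 1) + j₀ * 2 ^ (β k) ≤ n) := by
  obtain ⟨⟨dec, hsum⟩, -⟩ := h
  -- telescoping: nk j = 2^(β j) - nk (j+1) for j < r
  have hTr : ∀ j, r ≤ j → nk j = 0 := by
    intro j hj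
    rw [hnk, Finset.Ico_eq_empty (by omega), Finset.sum_empty]
  have hT : ∀ j, j < r → nk j = 2 ^ (β j) - nk (j + 1) := by
    intro j hj
    rw [hnk, hnk, Finset.sum_eq_sum_Ico_succ_bot hj]
    simp only [Nat.sub_self, pow_zero, one_mul]
    have hcg : ∀ i ∈ Finset.Ico (j + 1) r,
        (-1 : ℤ) ^ (i - j) * 2 ^ (β i) = -((-1) ^ (i - (j + 1)) * 2 ^ (β i)) := by
      intro i hi
      simp only [Finset.mem_Ico] at hi
      have hij : i - j = (i - (j + 1)) + 1 := by omega
      rw [hij, pow_succ]; ring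
    rw [Finset.sum_congr rfl hcg, Finset.sum_neg_distrib]
    ring
  -- bounds: 0 ≤ nk j ≤ 2^(β j)
  have hbnd : ∀ m j, r ≤ j + m → 0 ≤ nk j ∧ nk j ≤ 2 ^ (β j) := by
    intro m
    induction m with
    | zero =>
        intro j hj
        rw [hTr j (by omega)]
        exact ⟨le_refl 0, by positivity⟩
    | succ m ih =>
        intro j hj
        by_cases hjr : r ≤ j
        · rw [hTr j hjr]; exact ⟨le_refl 0, by positivity⟩
        · push_neg at hjr
          obtain ⟨ih1, ih2⟩ := ih (j + 1) (by omega)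
          have hle : nk (j + 1) ≤ 2 ^ (β j) := by
            by_cases h2 : j + 1 < r
            · calc nk (j + 1) ≤ 2 ^ (β (j + 1)) := ih2
                _ ≤ 2 ^ (β j) :=
                  pow_le_pow_right₀ (by norm_num) (le_of_lt (dec j (j + 1) (by omega) h2))
            · rw [hTr (j + 1) (by omega)]; positivity
          rw [hT j hjr]
          constructor <;> linarith
  have ha0 : 0 ≤ nk (k + 1) := (hbnd r (k + 1) (by omega)).1
  -- congruence: 2^(β k + 1) ∣ n - (-1)^k * nk k
  have htail : ∑ i ∈ Finset.Ico k r, (-1 : ℤ) ^ i * 2 ^ (β i) = (-1) ^ k * nk k := by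
    rw [hnk, Finset.mul_sum]
    apply Finset.sum_congr rfl
    intro i hi
    simp only [Finset.mem_Ico] at hi
    have h1 : (-1 : ℤ) ^ i = (-1) ^ k * (-1) ^ (i - k) := by
      rw [← pow_add]; congr 1; omega
    rw [h1, mul_assoc]
  have hsplit : (n : ℤ) = (∑ i ∈ Finset.range k, (-1 : ℤ) ^ i * 2 ^ (β i))
      + (-1) ^ k * nk k := by
    rw [hsum]
    simp only [Finset.range_eq_Ico]
    rw [← Finset.sum_Ico_consecutive _ (Nat.zero_le k) hk.le, htail]
  have hpre : (2 : ℤ) ^ (β k + 1) ∣ ∑ i ∈ Finset.range k, (-1 : ℤ) ^ i * 2 ^ (β i) := by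
    apply Finset.dvd_sum
    intro i hi
    simp only [Finset.mem_range] at hi
    have hβi : β k + 1 ≤ β i := dec i k hi hk
    exact Dvd.dvd.mul_left (pow_dvd_pow 2 hβi) _
  have hcong : (2 : ℤ) ^ (β k + 1) ∣ (n : ℤ) - (-1) ^ k * nk k := by
    have he : (n : ℤ) - (-1) ^ k * nk k
        = ∑ i ∈ Finset.range k, (-1 : ℤ) ^ i * 2 ^ (β i) := by
      rw [hsplit]; ring
    rw [he]; exact hpre
  -- set up the aux lemma
  set Hn : ℕ := 2 ^ (β k - 1) with hHn
  set Bn : ℕ := 2 ^ (β k) with hBn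
  have hBH : Bn = 2 * Hn := by
    rw [hBn, hHn, ← pow_succ']
    congr 1
    omega
  have hNk : nk k = 2 ^ (β k) - nk (k + 1) := hT k hk
  have hpow1 : ((Bn : ℤ)) = 2 ^ (β k) := by push_cast [hBn]; norm_num
  have hpow2 : ((Hn : ℤ)) * 4 = 2 ^ (β k + 1) := by
    push_cast [hHn]
    rw [pow_succ]
    rw [show (2 : ℤ) ^ (β k) = 2 ^ (β k - 1) * 2 by
      rw [← pow_succ]; congr 1; omega]
    ring
  have hcong' : (4 * (Hn : ℤ)) ∣ ((n : ℤ) - (2 * Hn - nk (k + 1)))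
      ∨ (4 * (Hn : ℤ)) ∣ ((n : ℤ) + (2 * Hn - nk (k + 1))) := by
    have h2H : 2 * (Hn : ℤ) = 2 ^ (β k) := by
      have : ((Bn : ℤ)) = 2 * Hn := by exact_mod_cast hBH
      rw [← this, hpow1]
    rcases Nat.even_or_odd k with he | ho
    · left
      have hne : (-1 : ℤ) ^ k = 1 := he.neg_one_pow
      rw [h2H, ← hNk]
      have := hcong
      rw [hne, one_mul] at this
      rw [← hpow2] at this
      convert this using 1 <;> ring
    · right
      have hne : (-1 : ℤ) ^ k = -1 := ho.neg_one_pow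
      rw [h2H, ← hNk]
      have := hcong
      rw [hne] at this
      rw [← hpow2] at this
      convert this using 1 <;> ring
  -- apply the aux lemma
  set c : ℕ := (s + 1) / 2 with hc
  have hc1 : (s : ℤ) ≤ 2 * c := by
    have : s ≤ 2 * c := by omega
    exact_mod_cast this
  have hc2 : 2 * (c : ℤ) ≤ s + 1 := by
    have : 2 * c ≤ s + 1 := by omega
    exact_mod_cast this
  have hHpos : (1 : ℤ) ≤ (Hn : ℤ) := by
    have : 1 ≤ Hn := Nat.one_le_two_pow
    exact_mod_cast this
  obtain ⟨j, hj0, hj1, hj2⟩ := aux_j0 (n : ℤ) (s : ℤ) (c : ℤ) (nk (k + 1)) (Hn : ℤ)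
    hHpos hc1 hc2 (by exact_mod_cast hs1) (by exact_mod_cast hs2) ha0 (by linarith) hcong'
  -- convert back to ℕ
  refine ⟨j.toNat, ?_⟩
  have hjj : ((j.toNat : ℤ)) = j := Int.toNat_of_nonneg hj0
  have h2H : 2 * (Hn : ℤ) = (Bn : ℤ) := by exact_mod_cast hBH.symm
  rw [h2H, ← hjj] at hj1 hj2
  have hj1' : c ≤ Hn + j.toNat * Bn := by exact_mod_cast hj1
  have hj2' : c + Hn + j.toNat * Bn ≤ n := by exact_mod_cast hj2
  have hgoal : s ≤ s / 2 + Hn + j.toNat * Bn ∧ s / 2 + Hn + j.toNat * Bn ≤ n ∧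
      s ≤ (s + 1) / 2 + Hn + j.toNat * Bn ∧ (s + 1) / 2 + Hn + j.toNat * Bn ≤ n := by
    generalize hY : j.toNat * Bn = Y at hj1' hj2'
    omega
  rw [hHn, hBn] at hgoal
  exact ⟨⟨hgoal.1, hgoal.2.1⟩, hgoal.2.2.1, hgoal.2.2.2⟩
end

section
/- Let e : V → V be a nilpotent linear map on a vector space V, let z_1, ..., z_t be linearly independent vectors in the kernel of e, let k_1, ..., k_t ≥ 0 be integers, and let w_1, ..., w_t ∈ V satisfy e^{k_i} w_i = z_i for all i. Then the set {e^j w_i : 1 ≤ i ≤ t, 0 ≤ j ≤ k_i} is linearly independent. -/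
/-- Lemma on Jordan chains: if `e` is nilpotent, `z 1, …, z t` are linearly independent
vectors in `ker e`, and `e^(k i) (w i) = z i` for each `i`, then the vectors
`e^j (w i)` for `1 ≤ i ≤ t`, `0 ≤ j ≤ k i` are linearly independent. -/
theorem jordan_chains_linearIndependent {K V : Type*} [Field K] [AddCommGroup V]
    [Module K V] [FiniteDimensional K V] (e : V →ₗ[K] V) (hnil : IsNilpotent e)
    {t : ℕ} (z w : Fin t → V) (k : Fin t → ℕ)
    (hz : LinearIndependent K z) (hker : ∀ i, e (z i) = 0)
    (hw : ∀ i, (e ^ (k i)) (w i) = z i) :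
    LinearIndependent K
      (fun p : Σ i : Fin t, Fin (k i + 1) => (e ^ (p.2 : ℕ)) (w p.1)) := by
  classical
  rw [Fintype.linearIndependent_iff]
  intro g hg
  by_contra hcon
  push_neg at hcon
  obtain ⟨q, hq⟩ := hcon
  set S : Finset (Σ i : Fin t, Fin (k i + 1)) := Finset.univ.filter (fun p => g p ≠ 0) with hS
  have hSne : S.Nonempty := ⟨q, by simp [hS, hq]⟩
  obtain ⟨p₀, hp₀S, hp₀⟩ := Finset.exists_mem_eq_sup S hSne (fun p => k p.1 - (p.2 : ℕ))
  set m := S.sup (fun p => k p.1 - (p.2 : ℕ)) with hm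
  have hgp₀ : g p₀ ≠ 0 := by
    have := hp₀S; rw [hS] at this; simpa using this
  -- coefficients for z
  have key : ∑ i : Fin t,
      (if h : m ≤ k i then g ⟨i, ⟨k i - m, by omega⟩⟩ else 0) • z i = 0 := by
    have h1 : (e ^ m) (∑ p : Σ i : Fin t, Fin (k i + 1), g p • (e ^ (p.2 : ℕ)) (w p.1)) = 0 := by
      rw [hg, map_zero]
    rw [map_sum] at h1
    simp_rw [map_smul, ← Module.End.mul_apply, ← pow_add] at h1
    have h2 : ∀ p : Σ i : Fin t, Fin (k i + 1),
        g p • (e ^ (m + (p.2 : ℕ))) (w p.1)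
          = (if m + (p.2 : ℕ) = k p.1 then g p • z p.1 else 0) := by
      intro p
      by_cases hgp : g p = 0
      · simp [hgp]
      · have hpS : p ∈ S := by rw [hS]; simp [hgp]
        have hle : k p.1 - (p.2 : ℕ) ≤ m :=
          Finset.le_sup (f := fun p => k p.1 - (p.2 : ℕ)) hpS
        have hjk : (p.2 : ℕ) ≤ k p.1 := by omega
        have hbig : k p.1 ≤ m + (p.2 : ℕ) := by omega
        have hpow : e ^ (m + (p.2 : ℕ)) = e ^ (m + (p.2 : ℕ) - k p.1) * e ^ (k p.1) := by
          rw [← pow_add]; congr 1; omega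
        have hval : (e ^ (m + (p.2 : ℕ))) (w p.1)
            = (e ^ (m + (p.2 : ℕ) - k p.1)) (z p.1) := by
          rw [hpow, Module.End.mul_apply, hw]
        rw [hval]
        rcases Nat.eq_zero_or_pos (m + (p.2 : ℕ) - k p.1) with h0 | hpos
        · have heq : m + (p.2 : ℕ) = k p.1 := by omega
          simp [h0, heq]
        · have hne : ¬ m + (p.2 : ℕ) = k p.1 := by omega
          have hd : m + (p.2 : ℕ) - k p.1 = (m + (p.2 : ℕ) - k p.1 - 1) + 1 := by omega
          rw [hd, pow_succ, Module.End.mul_apply, hker, map_zero, smul_zero, if_neg hne]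
    rw [Finset.sum_congr rfl (fun p _ => h2 p)] at h1
    rw [← h1, ← Finset.univ_sigma_univ, Finset.sum_sigma]
    refine Finset.sum_congr rfl fun i _ => ?_
    by_cases hmi : m ≤ k i
    · rw [dif_pos hmi]
      symm
      rw [Finset.sum_eq_single (⟨k i - m, by omega⟩ : Fin (k i + 1))]
      · rw [if_pos (by simp only [Fin.val_mk]; omega)]
      · intro j _ hj
        rw [if_neg]
        intro hcond
        have hcond' : m + (j : ℕ) = k i := hcond
        exact hj (Fin.ext (by simp only [Fin.val_mk]; omega))
      · intro h; exact absurd (Finset.mem_univ _) h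
    · rw [dif_neg hmi, zero_smul]
      symm
      apply Finset.sum_eq_zero
      intro j _
      rw [if_neg]
      show ¬ m + (j : ℕ) = k i
      have : (j : ℕ) ≤ k i := by omega
      omega
  have hzero := Fintype.linearIndependent_iff.mp hz _ key p₀.1
  obtain ⟨i₀, j₀⟩ := p₀
  have hjk : (j₀ : ℕ) ≤ k i₀ := by omega
  simp only at hp₀ hzero hgp₀
  rw [dif_pos (by omega)] at hzero
  rw [show (⟨k i₀ - m, by omega⟩ : Fin (k i₀ + 1)) = j₀ from
    Fin.ext (by simp only [Fin.val_mk]; omega)] at hzero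
  exact hgp₀ hzero
end

section
/- Let K be a field of characteristic 2, let e be the n×n nilpotent Jordan block acting on V = K^n with basis v_1,...,v_n where e v_1 = 0 and e v_i = v_{i−1}. Let e act on V ⊗ V by e ⊗ id + id ⊗ e. Then the vectors z_s := Σ_{i=1}^s v_i ⊗ v_{s+1−i}, for 1 ≤ s ≤ n, form a basis of the kernel of the action of e on V ⊗ V. -/
open TensorProduct

noncomputable section

variable (K : Type*) [Field K]

/-- The single nilpotent Jordan block of size `n` on `K^n`: sends the `i`-th
standard basis vector `v i` to `v (i-1)` (and `v 1` to `0`). -/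
def jordanShift (n : ℕ) : (Fin n → K) →ₗ[K] (Fin n → K) where
  toFun f := fun i => if h : (i : ℕ) + 1 < n then f ⟨(i : ℕ) + 1, h⟩ else 0
  map_add' f g := by funext i; by_cases h : (i : ℕ) + 1 < n <;> simp [h]
  map_smul' c f := by funext i; by_cases h : (i : ℕ) + 1 < n <;> simp [h]

/-- The basis vector `v j` of `K^n` for `1 ≤ j ≤ n`, with the convention
`v j = 0` for `j ≤ 0` or `j > n`. -/
def basisVec (n : ℕ) (j : ℤ) : Fin n → K :=
  if h : 1 ≤ j ∧ j ≤ (n : ℤ) then Pi.single (⟨(j - 1).toNat, by omega⟩ : Fin n) 1 else 0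

/-- The action `e ⊗ id + id ⊗ e` of the Jordan block `e` on `K^n ⊗ K^n`. -/
def tensorSquareAction (n : ℕ) :
    ((Fin n → K) ⊗[K] (Fin n → K)) →ₗ[K] ((Fin n → K) ⊗[K] (Fin n → K)) :=
  LinearMap.rTensor (Fin n → K) (jordanShift K n) +
    LinearMap.lTensor (Fin n → K) (jordanShift K n)

lemma basisVec_apply (n : ℕ) (j : ℤ) (p : Fin n) :
    basisVec K n j p = if j = (p : ℤ) + 1 then 1 else 0 := by
  unfold basisVec
  by_cases h : 1 ≤ j ∧ j ≤ (n : ℤ)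
  · rw [dif_pos h, Pi.single_apply]
    have hiff : (p = (⟨(j - 1).toNat, by omega⟩ : Fin n)) ↔ (j = (p : ℤ) + 1) := by
      rw [Fin.ext_iff]
      show (p:ℕ) = (j-1).toNat ↔ _
      omega
    simp only [hiff]
  · have hp := p.isLt
    rw [dif_neg h, if_neg (by omega)]
    rfl

lemma basisVec_zero (n : ℕ) (j : ℤ) (h : j ≤ 0 ∨ (n : ℤ) < j) : basisVec K n j = 0 := by
  unfold basisVec; rw [dif_neg]; omega

lemma jordanShift_basisVec (n : ℕ) (j : ℤ) (hj : j ≤ (n : ℤ)) :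
    jordanShift K n (basisVec K n j) = basisVec K n (j - 1) := by
  funext p
  show (if h : (p : ℕ) + 1 < n then basisVec K n j ⟨(p : ℕ) + 1, h⟩ else 0) = _
  split_ifs with h
  · rw [basisVec_apply, basisVec_apply]
    have hiff : (j = (((⟨(p : ℕ) + 1, h⟩ : Fin n) : ℕ) : ℤ) + 1) ↔ (j - 1 = ((p : ℕ) : ℤ) + 1) := by
      show (j = (((p : ℕ) + 1 : ℕ) : ℤ) + 1) ↔ _
      push_cast; omega
    simp only [hiff]
  · have hp := p.isLt
    rw [basisVec_apply, if_neg (by omega)]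

lemma basisFun_eq_basisVec (n : ℕ) (i : Fin n) :
    (Pi.basisFun K (Fin n)) i = basisVec K n ((i : ℕ) + 1) := by
  funext p
  rw [Pi.basisFun_apply, Pi.single_apply, basisVec_apply]
  exact if_congr (by rw [Fin.ext_iff]; push_cast; omega) rfl rfl

noncomputable def tb (n : ℕ) : Module.Basis (Fin n × Fin n) K ((Fin n → K) ⊗[K] (Fin n → K)) :=
  (Pi.basisFun K (Fin n)).tensorProduct (Pi.basisFun K (Fin n))

lemma repr_zsum (n : ℕ) (s : ℕ) (p q : Fin n) :
    ((tb K n).repr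
      (∑ i ∈ Finset.Icc (1 : ℤ) (s : ℤ), basisVec K n i ⊗ₜ[K] basisVec K n ((s : ℤ) + 1 - i))) (p, q)
    = if (p : ℕ) + (q : ℕ) + 1 = s then 1 else 0 := by
  unfold tb
  rw [map_sum, Finsupp.finset_sum_apply]
  simp only [Module.Basis.tensorProduct_repr_tmul_apply, Pi.basisFun_repr, basisVec_apply, smul_eq_mul]
  by_cases hc : (p : ℕ) + (q : ℕ) + 1 = s
  · rw [if_pos hc, Finset.sum_eq_single ((p : ℤ) + 1)]
    · rw [if_pos rfl, if_pos (by push_cast; omega), one_mul]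
    · intro i hi hne
      rw [if_neg hne, mul_zero]
    · intro habs
      exfalso; apply habs
      rw [Finset.mem_Icc]; push_cast; omega
  · rw [if_neg hc, Finset.sum_eq_zero]
    intro i hi
    rw [Finset.mem_Icc] at hi
    by_cases h1 : i = (p : ℤ) + 1
    · rw [if_neg (by push_cast; omega), zero_mul]
    · rw [if_neg h1, mul_zero]

lemma repr_action_basis (n : ℕ) (i j p q : Fin n) :
    ((tb K n).repr (tensorSquareAction K n ((tb K n) (i, j)))) (p, q)
    = (if ((i : ℕ) = (p : ℕ) + 1 ∧ j = q) then (1 : K) else 0)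
    + (if (i = p ∧ (j : ℕ) = (q : ℕ) + 1) then (1 : K) else 0) := by
  unfold tb
  rw [Module.Basis.tensorProduct_apply]
  unfold tensorSquareAction
  rw [LinearMap.add_apply, map_add, Finsupp.add_apply, LinearMap.rTensor_tmul,
    LinearMap.lTensor_tmul, basisFun_eq_basisVec, basisFun_eq_basisVec,
    jordanShift_basisVec K n _ (by push_cast; omega),
    jordanShift_basisVec K n _ (by push_cast; omega)]
  simp only [Module.Basis.tensorProduct_repr_tmul_apply, Pi.basisFun_repr, basisVec_apply, smul_eq_mul,
    ite_zero_mul_ite_zero, one_mul]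
  congr 1
  · exact if_congr (by simp only [Fin.ext_iff]; push_cast; omega) rfl rfl
  · exact if_congr (by simp only [Fin.ext_iff]; push_cast; omega) rfl rfl

lemma action_zsum [CharP K 2] (n : ℕ) (s : ℕ) (hs : s ≤ n) :
    tensorSquareAction K n
      (∑ i ∈ Finset.Icc (1 : ℤ) (s : ℤ), basisVec K n i ⊗ₜ[K] basisVec K n ((s : ℤ) + 1 - i)) = 0 := by
  have h2 : (2 : K) = 0 := by
    have := CharP.cast_eq_zero K 2
    exact_mod_cast this
  unfold tensorSquareAction
  rw [LinearMap.add_apply, map_sum, map_sum]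
  simp only [LinearMap.rTensor_tmul, LinearMap.lTensor_tmul]
  have e1 : ∀ i ∈ Finset.Icc (1 : ℤ) (s : ℤ),
      jordanShift K n (basisVec K n i) ⊗ₜ[K] basisVec K n ((s : ℤ) + 1 - i)
        = basisVec K n (i - 1) ⊗ₜ[K] basisVec K n ((s : ℤ) + 1 - i) := by
    intro i hi; rw [Finset.mem_Icc] at hi
    rw [jordanShift_basisVec K n _ (by omega)]
  have e2 : ∀ i ∈ Finset.Icc (1 : ℤ) (s : ℤ),
      basisVec K n i ⊗ₜ[K] jordanShift K n (basisVec K n ((s : ℤ) + 1 - i))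
        = basisVec K n i ⊗ₜ[K] basisVec K n ((s : ℤ) - i) := by
    intro i hi; rw [Finset.mem_Icc] at hi
    rw [jordanShift_basisVec K n _ (by omega)]
    congr 1
    ring_nf
  rw [Finset.sum_congr rfl e1, Finset.sum_congr rfl e2]
  have hsub1 : Finset.Icc (1 : ℤ) ((s : ℤ) - 1) ⊆ Finset.Icc (0 : ℤ) ((s : ℤ) - 1) :=
    Finset.Icc_subset_Icc (by omega) (le_refl _)
  have hsub2 : Finset.Icc (1 : ℤ) ((s : ℤ) - 1) ⊆ Finset.Icc (1 : ℤ) (s : ℤ) :=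
    Finset.Icc_subset_Icc (le_refl _) (by omega)
  have key1 : ∑ i ∈ Finset.Icc (1 : ℤ) (s : ℤ),
        basisVec K n (i - 1) ⊗ₜ[K] basisVec K n ((s : ℤ) + 1 - i)
      = ∑ i ∈ Finset.Icc (1 : ℤ) ((s : ℤ) - 1),
        basisVec K n i ⊗ₜ[K] basisVec K n ((s : ℤ) - i) := by
    rw [show Finset.Icc (1 : ℤ) (s : ℤ)
        = Finset.map (addRightEmbedding 1) (Finset.Icc (0 : ℤ) ((s : ℤ) - 1)) by
      rw [Finset.map_add_right_Icc]; norm_num]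
    rw [Finset.sum_map]
    simp only [addRightEmbedding_apply]
    have ee : ∀ i ∈ Finset.Icc (0 : ℤ) ((s : ℤ) - 1),
        basisVec K n (i + 1 - 1) ⊗ₜ[K] basisVec K n ((s : ℤ) + 1 - (i + 1))
          = basisVec K n i ⊗ₜ[K] basisVec K n ((s : ℤ) - i) := by
      intro i _
      congr 1 <;> [skip; congr 1] <;> ring
    rw [Finset.sum_congr rfl ee]
    rw [← Finset.sum_subset hsub1]
    intro i hi hni
    rw [Finset.mem_Icc] at hi
    rw [Finset.mem_Icc] at hni
    have hi0 : i = 0 := by omega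
    subst hi0
    rw [basisVec_zero K n 0 (Or.inl (le_refl 0)), TensorProduct.zero_tmul]
  have key2 : ∑ i ∈ Finset.Icc (1 : ℤ) (s : ℤ),
        basisVec K n i ⊗ₜ[K] basisVec K n ((s : ℤ) - i)
      = ∑ i ∈ Finset.Icc (1 : ℤ) ((s : ℤ) - 1),
        basisVec K n i ⊗ₜ[K] basisVec K n ((s : ℤ) - i) := by
    rw [← Finset.sum_subset hsub2]
    intro i hi hni
    rw [Finset.mem_Icc] at hi
    rw [Finset.mem_Icc] at hni
    have his : i = (s : ℤ) := by omega
    subst his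
    rw [show (s : ℤ) - (s : ℤ) = 0 by ring, basisVec_zero K n 0 (Or.inl (le_refl 0)),
      TensorProduct.tmul_zero]
  rw [key1, key2, ← two_smul K, h2, zero_smul]

lemma repr_action (n : ℕ) (x : (Fin n → K) ⊗[K] (Fin n → K)) (p q : Fin n) :
    ((tb K n).repr (tensorSquareAction K n x)) (p, q)
    = (if h : (p : ℕ) + 1 < n then ((tb K n).repr x) (⟨(p : ℕ) + 1, h⟩, q) else 0)
    + (if h : (q : ℕ) + 1 < n then ((tb K n).repr x) (p, ⟨(q : ℕ) + 1, h⟩) else 0) := by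
  have hx : ∑ P : Fin n × Fin n, ((tb K n).repr x) P • (tb K n) P = x := (tb K n).sum_repr x
  conv_lhs => rw [← hx]
  rw [map_sum, map_sum, Finsupp.finset_sum_apply]
  have hterm : ∀ P ∈ (Finset.univ : Finset (Fin n × Fin n)),
      ((tb K n).repr (tensorSquareAction K n (((tb K n).repr x) P • (tb K n) P))) (p, q)
      = ((tb K n).repr x) P * ((if ((P.1 : ℕ) = (p : ℕ) + 1 ∧ P.2 = q) then (1 : K) else 0)
        + (if (P.1 = p ∧ (P.2 : ℕ) = (q : ℕ) + 1) then (1 : K) else 0)) := by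
    rintro ⟨i, j⟩ _
    rw [map_smul, map_smul, Finsupp.smul_apply, repr_action_basis, smul_eq_mul]
  rw [Finset.sum_congr rfl hterm]
  simp only [mul_add]
  rw [Finset.sum_add_distrib]
  congr 1
  · by_cases h : (p : ℕ) + 1 < n
    · rw [dif_pos h]
      have hcond : ∀ P : Fin n × Fin n,
          ((P.1 : ℕ) = (p : ℕ) + 1 ∧ P.2 = q) ↔ P = ((⟨(p : ℕ) + 1, h⟩ : Fin n), q) := by
        rintro ⟨i, j⟩
        simp [Prod.ext_iff, Fin.ext_iff]
      simp only [hcond, mul_ite, mul_one, mul_zero]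
      rw [Finset.sum_ite_eq', if_pos (Finset.mem_univ _)]
    · rw [dif_neg h, Finset.sum_eq_zero]
      rintro ⟨i, j⟩ _
      rw [if_neg (by rintro ⟨h1, -⟩; exact h (h1 ▸ i.isLt)), mul_zero]
  · by_cases h : (q : ℕ) + 1 < n
    · rw [dif_pos h]
      have hcond : ∀ P : Fin n × Fin n,
          (P.1 = p ∧ (P.2 : ℕ) = (q : ℕ) + 1) ↔ P = (p, (⟨(q : ℕ) + 1, h⟩ : Fin n)) := by
        rintro ⟨i, j⟩
        simp [Prod.ext_iff, Fin.ext_iff]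
      simp only [hcond, mul_ite, mul_one, mul_zero]
      rw [Finset.sum_ite_eq', if_pos (Finset.mem_univ _)]
    · rw [dif_neg h, Finset.sum_eq_zero]
      rintro ⟨i, j⟩ _
      rw [if_neg (by rintro ⟨-, h2⟩; exact h (h2 ▸ j.isLt)), mul_zero]

lemma ker_rel (n : ℕ) (x : (Fin n → K) ⊗[K] (Fin n → K))
    (hx : tensorSquareAction K n x = 0) (p q : Fin n) :
    (if h : (p : ℕ) + 1 < n then ((tb K n).repr x) (⟨(p : ℕ) + 1, h⟩, q) else 0)
    + (if h : (q : ℕ) + 1 < n then ((tb K n).repr x) (p, ⟨(q : ℕ) + 1, h⟩) else 0) = 0 := by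
  rw [← repr_action, hx, LinearEquiv.map_zero]
  rfl


/-- In characteristic two, the vectors `z s = ∑_{i=1}^s v i ⊗ v (s+1-i)`, `1 ≤ s ≤ n`,
form a basis of the kernel of `e ⊗ id + id ⊗ e` on `K^n ⊗ K^n`. -/
theorem kernel_tensorSquare_basis [CharP K 2] (n : ℕ)
    (z : ℕ → (Fin n → K) ⊗[K] (Fin n → K))
    (hz : ∀ s : ℕ, z s = ∑ i ∈ Finset.Icc (1 : ℤ) (s : ℤ),
      basisVec K n i ⊗ₜ[K] basisVec K n ((s : ℤ) + 1 - i)) :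
    LinearIndependent K (fun s : Fin n => z ((s : ℕ) + 1)) ∧
      Submodule.span K (Set.range (fun s : Fin n => z ((s : ℕ) + 1))) =
        LinearMap.ker (tensorSquareAction K n) := by
  constructor
  · rw [Fintype.linearIndependent_iff]
    intro g hg t
    have hn : 0 < n := t.pos
    have h0 := congrArg (fun v => ((tb K n).repr v) (t, (⟨0, hn⟩ : Fin n))) hg
    simp only [hz] at h0
    rw [map_sum, Finsupp.finset_sum_apply] at h0
    simp only [map_smul, Finsupp.smul_apply, repr_zsum, smul_eq_mul] at h0
    have hcond : ∀ s : Fin n, ((t : ℕ) + 0 + 1 = (s : ℕ) + 1) ↔ s = t := by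
      intro s; rw [Fin.ext_iff]; omega
    simp only [hcond, mul_ite, mul_one, mul_zero] at h0
    rw [Finset.sum_ite_eq', if_pos (Finset.mem_univ _)] at h0
    simpa using h0
  · apply le_antisymm
    · rw [Submodule.span_le]
      rintro v ⟨s, rfl⟩
      simp only [SetLike.mem_coe, LinearMap.mem_ker]
      rw [hz]
      exact action_zsum K n ((s : ℕ) + 1) (by omega)
    · intro x hxk
      rw [LinearMap.mem_ker] at hxk
      set c : ℕ → ℕ → K := fun a b =>
        if h : a < n ∧ b < n then ((tb K n).repr x) (⟨a, h.1⟩, ⟨b, h.2⟩) else 0 with hc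
      have hcv : ∀ p q : Fin n, c (p : ℕ) (q : ℕ) = ((tb K n).repr x) (p, q) := by
        intro p q
        simp only [hc]
        rw [dif_pos ⟨p.isLt, q.isLt⟩]
      have hrel : ∀ a b : ℕ, c a (b + 1) = c (a + 1) b := by
        intro a b
        by_cases h : a < n ∧ b < n
        · have hr : (if hh : a + 1 < n
                then ((tb K n).repr x) (⟨a + 1, hh⟩, ⟨b, h.2⟩) else 0)
              + (if hh : b + 1 < n
                then ((tb K n).repr x) (⟨a, h.1⟩, ⟨b + 1, hh⟩) else 0) = 0 :=
            ker_rel K n x hxk ⟨a, h.1⟩ ⟨b, h.2⟩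
          have e1 : (if hh : a + 1 < n
              then ((tb K n).repr x) (⟨a + 1, hh⟩, ⟨b, h.2⟩) else 0) = c (a + 1) b := by
            by_cases hh : a + 1 < n
            · rw [dif_pos hh]; simp only [hc]; rw [dif_pos ⟨hh, h.2⟩]
            · rw [dif_neg hh]; simp only [hc]; rw [dif_neg (by omega)]
          have e2 : (if hh : b + 1 < n
              then ((tb K n).repr x) (⟨a, h.1⟩, ⟨b + 1, hh⟩) else 0) = c a (b + 1) := by
            by_cases hh : b + 1 < n
            · rw [dif_pos hh]; simp only [hc]; rw [dif_pos ⟨h.1, hh⟩]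
            · rw [dif_neg hh]; simp only [hc]; rw [dif_neg (by omega)]
          rw [e1, e2] at hr
          rw [eq_neg_of_add_eq_zero_right hr, CharTwo.neg_eq]
        · simp only [hc]
          rw [dif_neg (by omega), dif_neg (by omega)]
      have hdiag : ∀ b a : ℕ, c a b = c (a + b) 0 := by
        intro b
        induction b with
        | zero => intro a; rfl
        | succ m ih =>
          intro a
          rw [hrel a m, ih (a + 1), show a + 1 + m = a + (m + 1) by omega]
      have hbig : ∀ k : ℕ, n ≤ k → c k 0 = 0 := by
        intro k hk
        simp only [hc]
        rw [dif_neg (by omega)]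
      have hx2 : x = ∑ s : Fin n, c (s : ℕ) 0 • z ((s : ℕ) + 1) := by
        apply (tb K n).repr.injective
        ext P
        obtain ⟨p, q⟩ := P
        rw [map_sum, Finsupp.finset_sum_apply]
        simp only [hz, map_smul, Finsupp.smul_apply, repr_zsum, smul_eq_mul]
        rw [← hcv p q, hdiag]
        by_cases hpq : (p : ℕ) + (q : ℕ) < n
        · have hcond : ∀ s : Fin n,
              ((p : ℕ) + (q : ℕ) + 1 = (s : ℕ) + 1) ↔ s = (⟨(p : ℕ) + (q : ℕ), hpq⟩ : Fin n) := by
            intro s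
            rw [Fin.ext_iff]
            show _ ↔ (s : ℕ) = (p : ℕ) + (q : ℕ)
            omega
          simp only [hcond, mul_ite, mul_one, mul_zero]
          rw [Finset.sum_ite_eq', if_pos (Finset.mem_univ _)]
        · rw [hbig _ (by omega), Finset.sum_eq_zero]
          intro s _
          rw [if_neg (by have := s.isLt; omega), mul_zero]
      rw [hx2]
      exact Submodule.sum_mem _ (fun s _ =>
        Submodule.smul_mem _ _ (Submodule.subset_span ⟨s, rfl⟩))

end
end

section
/- Let K be a field of characteristic 2 and let e act on W_n = K^n as a single nilpotent Jordan block, with consecutive-ones expansion n = Σ (-1)^{i+1} 2^{β_i} (β_1 > ... > β_r ≥ 0). For 1 ≤ k ≤ r define d_k := 2^{β_k} + Σ_{i=k+1}^r (-1)^{k+i} 2^{β_i + 1}. Then the nilpotent operator e ⊗ id + id ⊗ e on W_n ⊗ W_n has Jordan type consisting, for each 1 ≤ k ≤ r, of exactly d_k Jordan blocks of size 2^{β_k} (and no other blocks). -/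
open TensorProduct

noncomputable section

variable (K : Type*) [Field K]

/-- A nilpotent (or unipotent, after subtracting the identity) endomorphism `f` has
Jordan type `M` (the multiset of its Jordan block sizes) iff for every `m` the kernel
of `f ^ m` has dimension `∑_{s ∈ M} min s m`. -/
def HasJordanType {K V : Type*} [Field K] [AddCommGroup V] [Module K V]
    (f : V →ₗ[K] V) (M : Multiset ℕ) : Prop :=
  ∀ m : ℕ, Module.finrank K (LinearMap.ker (f ^ m)) = (M.map fun s => min s m).sum


variable {K}

section JTAux



namespace JT2G

variable {K V W U : Type*} [Field K] [AddCommGroup V] [Module K V]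
  [AddCommGroup W] [Module K W] [AddCommGroup U] [Module K U]

open Module LinearMap Submodule

/-- rank-nullity for a restriction. -/
lemma finrank_inf_ker_add_finrank_map [FiniteDimensional K V]
    (g : V →ₗ[K] W) (p : Submodule K V) :
    finrank K ↥(p ⊓ ker g) + finrank K ↥(p.map g) = finrank K ↥p := by
  have h := LinearMap.finrank_range_add_finrank_ker (g.comp p.subtype)
  rw [LinearMap.range_comp, Submodule.range_subtype, LinearMap.ker_comp] at h
  have e : finrank K ↥(Submodule.comap p.subtype (ker g)) = finrank K ↥(p ⊓ ker g) := by
    rw [← Submodule.map_comap_subtype]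
    exact LinearEquiv.finrank_eq
      (Submodule.equivMapOfInjective p.subtype (Submodule.injective_subtype p)
        (Submodule.comap p.subtype (ker g)))
  rw [e] at h
  omega

lemma finrank_comap [FiniteDimensional K V] (g : V →ₗ[K] V) (Wm : Submodule K V) :
    finrank K ↥(Wm.comap g) = finrank K ↥(ker g) + finrank K ↥(Wm ⊓ range g) := by
  have h := finrank_inf_ker_add_finrank_map g (Wm.comap g)
  rw [Submodule.map_comap_eq] at h
  have hk : Wm.comap g ⊓ ker g = ker g := by
    rw [inf_eq_right]
    intro x hx
    simp only [Submodule.mem_comap, LinearMap.mem_ker.mp hx]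
    exact Wm.zero_mem
  rw [hk, inf_comm] at h
  omega

lemma finrank_ker_pow_succ_le [FiniteDimensional K V] (f : V →ₗ[K] V) (j : ℕ) :
    finrank K ↥(ker (f^(j+1))) ≤ finrank K ↥(ker (f^j)) + finrank K ↥(ker f) := by
  have hk : ker (f^(j+1)) = (ker (f^j)).comap f := by
    rw [pow_succ, Module.End.mul_eq_comp, LinearMap.ker_comp]
  rw [hk, finrank_comap]
  have := Submodule.finrank_mono (inf_le_left : ker (f^j) ⊓ range f ≤ ker (f^j))
  omega

lemma ker_pow_mono [FiniteDimensional K V] (f : V →ₗ[K] V) (j : ℕ) :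
    ker (f^j) ≤ ker (f^(j+1)) := by
  intro x hx
  rw [LinearMap.mem_ker, pow_succ', Module.End.mul_apply, LinearMap.mem_ker.mp hx, map_zero]

/-- Pow of intertwining maps. -/
lemma comp_pow {φ : U →ₗ[K] V} {fU : U →ₗ[K] U} {S : V →ₗ[K] V}
    (h : S.comp φ = φ.comp fU) (j : ℕ) : (S^j).comp φ = φ.comp (fU^j) := by
  induction j with
  | zero => simp [Module.End.one_eq_id]
  | succ j ih =>
    rw [pow_succ, pow_succ, Module.End.mul_eq_comp, Module.End.mul_eq_comp, LinearMap.comp_assoc,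
      h, ← LinearMap.comp_assoc, ih, LinearMap.comp_assoc]

/-- Transfer kernels through an injective equivariant map. -/
lemma map_ker_pow {φ : U →ₗ[K] V} (hφ : Function.Injective φ) {fU : U →ₗ[K] U} {S : V →ₗ[K] V}
    (h : S.comp φ = φ.comp fU) (j : ℕ) :
    (ker (fU^j)).map φ = range φ ⊓ ker (S^j) := by
  have hc := comp_pow h j
  ext x
  simp only [Submodule.mem_map, Submodule.mem_inf, LinearMap.mem_ker, LinearMap.mem_range]
  constructor
  · rintro ⟨u, hu, rfl⟩
    refine ⟨⟨u, rfl⟩, ?_⟩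
    have := congrArg (fun ψ : U →ₗ[K] V => ψ u) hc
    simp only [LinearMap.comp_apply] at this
    rw [this, hu, map_zero]
  · rintro ⟨⟨u, rfl⟩, hx⟩
    refine ⟨u, ?_, rfl⟩
    apply hφ
    have := congrArg (fun ψ : U →ₗ[K] V => ψ u) hc
    simp only [LinearMap.comp_apply] at this
    rw [← this, hx, map_zero]

lemma finrank_inf_ker_pow {φ : U →ₗ[K] V} (hφ : Function.Injective φ)
    {fU : U →ₗ[K] U} {S : V →ₗ[K] V}
    (h : S.comp φ = φ.comp fU) (j : ℕ) :
    finrank K ↥(range φ ⊓ ker (S^j)) = finrank K ↥(ker (fU^j)) := by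
  rw [← map_ker_pow hφ h j]
  exact (LinearEquiv.finrank_eq (Submodule.equivMapOfInjective φ hφ (ker (fU^j)))).symm

/-- Conjugation by a linear equiv preserves kernel dimensions of powers. -/
lemma finrank_ker_pow_conj (e : V ≃ₗ[K] W) {f : V →ₗ[K] V} {g : W →ₗ[K] W}
    (h : g.comp (e : V →ₗ[K] W) = (e : V →ₗ[K] W).comp f) (j : ℕ) :
    finrank K ↥(ker (g^j)) = finrank K ↥(ker (f^j)) := by
  have := finrank_inf_ker_pow (e.injective) h j
  rwa [LinearEquiv.range, top_inf_eq] at this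

end JT2G

namespace JT2

variable {K : Type*} [Field K]

/-- Shift in the first coordinate. -/
def Lop (K : Type*) [Field K] (a b : ℕ) : (Fin a × Fin b → K) →ₗ[K] (Fin a × Fin b → K) where
  toFun f := fun p => if h : (p.1 : ℕ) + 1 < a then f (⟨(p.1:ℕ)+1, h⟩, p.2) else 0
  map_add' f g := by funext p; by_cases h : (p.1:ℕ)+1 < a <;> simp [h]
  map_smul' c f := by funext p; by_cases h : (p.1:ℕ)+1 < a <;> simp [h]

/-- Shift in the second coordinate. -/
def Rop (K : Type*) [Field K] (a b : ℕ) : (Fin a × Fin b → K) →ₗ[K] (Fin a × Fin b → K) where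
  toFun f := fun p => if h : (p.2 : ℕ) + 1 < b then f (p.1, ⟨(p.2:ℕ)+1, h⟩) else 0
  map_add' f g := by funext p; by_cases h : (p.2:ℕ)+1 < b <;> simp [h]
  map_smul' c f := by funext p; by_cases h : (p.2:ℕ)+1 < b <;> simp [h]

def Sop (K : Type*) [Field K] (a b : ℕ) : (Fin a × Fin b → K) →ₗ[K] (Fin a × Fin b → K) :=
  Lop K a b + Rop K a b

lemma Lop_apply (a b : ℕ) (f : Fin a × Fin b → K) (p : Fin a × Fin b) :
    Lop K a b f p = if h : (p.1 : ℕ) + 1 < a then f (⟨(p.1:ℕ)+1, h⟩, p.2) else 0 := rfl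

lemma Rop_apply (a b : ℕ) (f : Fin a × Fin b → K) (p : Fin a × Fin b) :
    Rop K a b f p = if h : (p.2 : ℕ) + 1 < b then f (p.1, ⟨(p.2:ℕ)+1, h⟩) else 0 := rfl

lemma Sop_apply (a b : ℕ) (f : Fin a × Fin b → K) (p : Fin a × Fin b) :
    Sop K a b f p = (if h : (p.1 : ℕ) + 1 < a then f (⟨(p.1:ℕ)+1, h⟩, p.2) else 0) +
      (if h : (p.2 : ℕ) + 1 < b then f (p.1, ⟨(p.2:ℕ)+1, h⟩) else 0) := rfl

lemma commute_Lop_Rop (a b : ℕ) : Commute (Lop K a b) (Rop K a b) := by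
  apply LinearMap.ext; intro f; funext p
  simp only [Module.End.mul_apply, Lop_apply, Rop_apply]
  by_cases h1 : (p.1:ℕ)+1 < a <;> by_cases h2 : (p.2:ℕ)+1 < b <;> simp [h1, h2]

lemma Lop_pow_apply (a b : ℕ) (k : ℕ) (f : Fin a × Fin b → K) (p : Fin a × Fin b) :
    ((Lop K a b)^k) f p = if h : (p.1 : ℕ) + k < a then f (⟨(p.1:ℕ)+k, h⟩, p.2) else 0 := by
  induction k generalizing f p with
  | zero => simp
  | succ k ih =>
    rw [pow_succ', Module.End.mul_apply, Lop_apply]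
    by_cases h : (p.1:ℕ)+1 < a
    · rw [dif_pos h, ih]
      by_cases h2 : (p.1:ℕ)+1+k < a
      · rw [dif_pos h2, dif_pos (by omega : (p.1:ℕ)+(k+1) < a)]
        congr 2 <;> simp <;> omega
      · rw [dif_neg h2, dif_neg (by omega)]
    · rw [dif_neg h, dif_neg (by omega)]

lemma Rop_pow_apply (a b : ℕ) (k : ℕ) (f : Fin a × Fin b → K) (p : Fin a × Fin b) :
    ((Rop K a b)^k) f p = if h : (p.2 : ℕ) + k < b then f (p.1, ⟨(p.2:ℕ)+k, h⟩) else 0 := by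
  induction k generalizing f p with
  | zero => simp
  | succ k ih =>
    rw [pow_succ', Module.End.mul_apply, Rop_apply]
    by_cases h : (p.2:ℕ)+1 < b
    · rw [dif_pos h, ih]
      by_cases h2 : (p.2:ℕ)+1+k < b
      · rw [dif_pos h2, dif_pos (by omega : (p.2:ℕ)+(k+1) < b)]
        congr 2 <;> simp <;> omega
      · rw [dif_neg h2, dif_neg (by omega)]
    · rw [dif_neg h, dif_neg (by omega)]

lemma Lop_pow_eq_zero (a b : ℕ) : (Lop K a b)^a = 0 := by
  apply LinearMap.ext; intro f; funext p
  rw [Lop_pow_apply, dif_neg (by omega)]; rfl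

lemma Rop_pow_eq_zero (a b : ℕ) : (Rop K a b)^b = 0 := by
  apply LinearMap.ext; intro f; funext p
  rw [Rop_pow_apply, dif_neg (by omega)]; rfl

lemma Sop_pow_eq_zero [CharP K 2] (a b t : ℕ) (ha : a ≤ 2^t) (hb : b ≤ 2^t) :
    (Sop K a b)^(2^t) = 0 := by
  rcases Nat.eq_zero_or_pos a with h0 | hA
  · subst h0
    haveI : IsEmpty (Fin 0 × Fin b) := by infer_instance
    apply LinearMap.ext; intro f
    haveI : Subsingleton (Fin 0 × Fin b → K) := by infer_instance
    exact Subsingleton.elim _ _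
  rcases Nat.eq_zero_or_pos b with h0 | hB
  · subst h0
    apply LinearMap.ext; intro f
    haveI : Subsingleton (Fin a × Fin 0 → K) := by infer_instance
    exact Subsingleton.elim _ _
  haveI : Nontrivial (Fin a × Fin b → K) := by
    haveI : Nonempty (Fin a × Fin b) := ⟨(⟨0, hA⟩, ⟨0, hB⟩)⟩
    infer_instance
  have hinj : Function.Injective (algebraMap K (Module.End K (Fin a × Fin b → K))) := by
    intro c d hcd
    obtain ⟨v, hv⟩ := exists_ne (0 : Fin a × Fin b → K)
    have := congrArg (fun φ : Module.End K (Fin a × Fin b → K) => φ v) hcd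
    simp only [Module.algebraMap_end_apply] at this
    have h2 : (c - d) • v = 0 := by rw [sub_smul, this, sub_self]
    rcases smul_eq_zero.mp h2 with h | h
    · exact sub_eq_zero.mp h
    · exact absurd h hv
  haveI : CharP (Module.End K (Fin a × Fin b → K)) 2 := charP_of_injective_algebraMap hinj 2
  haveI : Fact (Nat.Prime 2) := ⟨Nat.prime_two⟩
  have hfrob : (Sop K a b)^(2^t) = (Lop K a b)^(2^t) + (Rop K a b)^(2^t) :=
    add_pow_char_pow_of_commute 2 t (commute_Lop_Rop a b)
  have hL : (Lop K a b)^(2^t) = 0 :=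
    pow_eq_zero_of_le ha (Lop_pow_eq_zero a b)
  have hR : (Rop K a b)^(2^t) = 0 :=
    pow_eq_zero_of_le hb (Rop_pow_eq_zero a b)
  rw [hfrob, hL, hR, add_zero]

lemma char2_add_eq_zero_iff [CharP K 2] (x y : K) : x + y = 0 ↔ x = y := by
  constructor
  · intro h
    rw [← CharTwo.neg_eq y]
    exact eq_neg_of_add_eq_zero_left h
  · intro h
    rw [h, CharTwo.add_self_eq_zero]

/-- The antidiagonal kernel injection. -/
def kerInj (K : Type*) [Field K] (a b : ℕ) : (Fin a → K) →ₗ[K] (Fin a × Fin b → K) where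
  toFun c := fun p => if h : (p.1 : ℕ) + (p.2 : ℕ) < a then c ⟨(p.1:ℕ)+(p.2:ℕ), h⟩ else 0
  map_add' c d := by funext p; by_cases h : (p.1:ℕ)+(p.2:ℕ) < a <;> simp [h]
  map_smul' r c := by funext p; by_cases h : (p.1:ℕ)+(p.2:ℕ) < a <;> simp [h]

lemma kerInj_injective (a b : ℕ) (hab : a ≤ b) (ha : 0 < a) :
    Function.Injective (kerInj K a b) := by
  intro c d h
  funext i
  have := congrFun h (⟨(i:ℕ), i.2⟩, ⟨0, lt_of_lt_of_le ha hab⟩)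
  simpa [kerInj, i.2] using this

lemma kerInj_mem_ker [CharP K 2] (a b : ℕ) (hab : a ≤ b) (c : Fin a → K) :
    Sop K a b (kerInj K a b c) = 0 := by
  have kap : ∀ (q : Fin a × Fin b), kerInj K a b c q =
      if h : (q.1 : ℕ) + (q.2 : ℕ) < a then c ⟨(q.1:ℕ)+(q.2:ℕ), h⟩ else 0 := fun q => rfl
  funext p
  rw [Sop_apply, Pi.zero_apply]
  by_cases hd : (p.1:ℕ) + (p.2:ℕ) + 1 < a
  · rw [dif_pos (by omega : (p.1:ℕ)+1 < a), dif_pos (by omega : (p.2:ℕ)+1 < b), kap, kap]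
    rw [dif_pos (by fin_omega), dif_pos (by fin_omega)]
    rw [char2_add_eq_zero_iff]
    congr 1
    simp only [Fin.mk.injEq]
    omega
  · have e1 : ∀ (h1 : (p.1:ℕ)+1 < a), (kerInj K a b c) (⟨(p.1:ℕ)+1, h1⟩, p.2) = 0 := by
      intro h1; rw [kap, dif_neg (by fin_omega)]
    have e2 : ∀ (h2 : (p.2:ℕ)+1 < b), (kerInj K a b c) (p.1, ⟨(p.2:ℕ)+1, h2⟩) = 0 := by
      intro h2; rw [kap, dif_neg (by fin_omega)]
    by_cases h1 : (p.1:ℕ)+1 < a <;> by_cases h2 : (p.2:ℕ)+1 < b <;>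
      simp [h1, h2, e1, e2]

/-- Every kernel element is in the range of `kerInj`. -/
lemma ker_le_range_kerInj [CharP K 2] (a b : ℕ) (hab : a ≤ b)
    (f : Fin a × Fin b → K) (hf : Sop K a b f = 0) :
    ∃ c : Fin a → K, kerInj K a b c = f := by
  rcases Nat.eq_zero_or_pos a with rfl | ha
  · exact ⟨fun i => 0, by funext p; exact absurd p.1.2 (by omega)⟩
  have hb : 0 < b := lt_of_lt_of_le ha hab
  have fc : ∀ (i j i' j' : ℕ) (hi : i < a) (hj : j < b) (hi' : i' < a) (hj' : j' < b),
      i = i' → j = j' → f (⟨i,hi⟩,⟨j,hj⟩) = f (⟨i',hi'⟩,⟨j',hj'⟩) := by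
    intro i j i' j' hi hj hi' hj' e1 e2
    subst e1; subst e2; rfl
  have rel : ∀ p : Fin a × Fin b,
      (if h : (p.1:ℕ)+1 < a then f (⟨(p.1:ℕ)+1, h⟩, p.2) else 0) =
      - (if h : (p.2:ℕ)+1 < b then f (p.1, ⟨(p.2:ℕ)+1, h⟩) else 0) := by
    intro p
    have h0 := congrFun hf p
    rw [Sop_apply, Pi.zero_apply] at h0
    exact eq_neg_of_add_eq_zero_left h0
  have relN : ∀ (i j : ℕ) (hi : i < a) (hj : j < b),
      (if h : i+1 < a then f (⟨i+1, h⟩, ⟨j, hj⟩) else 0) =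
      - (if h : j+1 < b then f (⟨i, hi⟩, ⟨j+1, h⟩) else 0) := by
    intro i j hi hj
    exact rel (⟨i, hi⟩, ⟨j, hj⟩)
  have rel1 : ∀ (i j : ℕ) (hi : i+1 < a) (hj : j+1 < b) (hi' : i < a) (hj' : j < b),
      f (⟨i+1, hi⟩, ⟨j, hj'⟩) = f (⟨i, hi'⟩, ⟨j+1, hj⟩) := by
    intro i j hi hj hi' hj'
    have h0 := relN i j hi' hj'
    rw [dif_pos hi, dif_pos hj] at h0
    rw [h0, CharTwo.neg_eq]
  have rel2 : ∀ (j : ℕ) (hj : j < b), 1 ≤ j → f (⟨a-1, by omega⟩, ⟨j, hj⟩) = 0 := by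
    intro j hj hj1
    have h0 := relN (a-1) (j-1) (by omega) (by omega)
    rw [dif_neg (by omega), dif_pos (by omega)] at h0
    have h0' := h0.symm
    rw [neg_eq_zero] at h0'
    rw [fc (a-1) j (a-1) ((j-1)+1) (by omega) hj (by omega) (by omega) rfl (by omega)]
    exact h0'
  have rel3 : ∀ (i : ℕ) (hi : i < a), 1 ≤ i → f (⟨i, hi⟩, ⟨b-1, by omega⟩) = 0 := by
    intro i hi hi1
    have h0 := relN (i-1) (b-1) (by omega) (by omega)
    rw [dif_pos (by omega), dif_neg (by omega), neg_zero] at h0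
    rw [fc i (b-1) ((i-1)+1) (b-1) hi (by omega) (by omega) (by omega) (by omega) rfl]
    exact h0
  have zcl : ∀ (k i j : ℕ) (hi : i < a) (hj : j < b), a - 1 - i = k → a ≤ i + j →
      f (⟨i, hi⟩, ⟨j, hj⟩) = 0 := by
    intro k
    induction k with
    | zero =>
      intro i j hi hj hk hij
      rw [fc i j (a-1) j hi hj (by omega) hj (by omega) rfl]
      exact rel2 j hj (by omega)
    | succ k ih =>
      intro i j hi hj hk hij
      have hj1 : 1 ≤ j := by omega
      by_cases hjb : j = b - 1
      · rcases Nat.eq_zero_or_pos i with rfl | hi1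
        · -- i = 0, j = b-1, a ≥ 2 (since a-1-0 = k+1 ≥ 1)
          rw [fc 0 j 0 ((j-1)+1) hi hj hi (by omega) rfl (by omega)]
          rw [← rel1 0 (j-1) (by omega) (by omega) hi (by omega)]
          rw [fc _ _ 1 (j-1) _ _ (by omega) (by omega) (by omega) rfl]
          exact ih 1 (j-1) (by omega) (by omega) (by omega) (by omega)
        · rw [fc i j i (b-1) hi hj hi (by omega) rfl hjb]
          exact rel3 i hi hi1
      · -- j < b-1 and i < a-1
        rw [fc i j i ((j-1)+1) hi hj hi (by omega) rfl (by omega)]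
        rw [← rel1 i (j-1) (by omega) (by omega) hi (by omega)]
        rw [fc _ _ (i+1) (j-1) _ _ (by omega) (by omega) rfl rfl]
        exact ih (i+1) (j-1) (by omega) (by omega) (by omega) (by omega)
  have ecl : ∀ (j i : ℕ) (hi : i < a) (hj : j < b) (hij : i + j < a),
      f (⟨i, hi⟩, ⟨j, hj⟩) = f (⟨i+j, hij⟩, ⟨0, hb⟩) := by
    intro j
    induction j with
    | zero => intro i hi hj hij; exact fc _ _ _ _ _ _ _ _ (by omega) rfl
    | succ j ih =>
      intro i hi hj hij
      rw [← rel1 i j (by omega) (by omega) hi (by omega)]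
      rw [ih (i+1) (by omega) (by omega) (by omega)]
      exact fc _ _ _ _ _ _ _ _ (by omega) rfl
  refine ⟨fun d => f (⟨(d:ℕ), d.2⟩, ⟨0, hb⟩), ?_⟩
  funext p
  show (if h : (p.1:ℕ)+(p.2:ℕ) < a then _ else 0) = f p
  by_cases h : (p.1:ℕ)+(p.2:ℕ) < a
  · rw [dif_pos h]
    have h0 := ecl (p.2:ℕ) (p.1:ℕ) p.1.2 p.2.2 h
    simp only [Fin.eta] at h0 ⊢
    rw [← h0]
  · rw [dif_neg h]
    have h0 := zcl (a-1-(p.1:ℕ)) (p.1:ℕ) (p.2:ℕ) p.1.2 p.2.2 rfl (by omega)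
    simp only [Fin.eta] at h0
    rw [h0]

lemma finrank_ker_Sop [CharP K 2] (a b : ℕ) (hab : a ≤ b) :
    Module.finrank K ↥(LinearMap.ker (Sop K a b)) = a := by
  rcases Nat.eq_zero_or_pos a with rfl | ha
  · haveI : IsEmpty (Fin 0 × Fin b) := by infer_instance
    haveI : Subsingleton (Fin 0 × Fin b → K) := by infer_instance
    exact Module.finrank_zero_of_subsingleton (M := ↥(LinearMap.ker (Sop K 0 b)))
  have hr : LinearMap.range (kerInj K a b) = LinearMap.ker (Sop K a b) := by
    apply le_antisymm
    · rintro x ⟨c, rfl⟩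
      exact LinearMap.mem_ker.mpr (kerInj_mem_ker a b hab c)
    · intro f hf
      obtain ⟨c, hc⟩ := ker_le_range_kerInj a b hab f (LinearMap.mem_ker.mp hf)
      exact ⟨c, hc⟩
  rw [← hr, LinearMap.finrank_range_of_inj (kerInj_injective a b hab ha)]
  simp

open Module LinearMap

lemma finrank_grid (a b : ℕ) : finrank K (Fin a × Fin b → K) = a * b := by
  rw [Module.finrank_fintype_fun_eq_card]
  simp [Fintype.card_prod]

lemma finrank_ker_Sop_pow [CharP K 2] (t a : ℕ) (ha : a ≤ 2^t) (j : ℕ) :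
    finrank K ↥(ker ((Sop K a (2^t))^j)) = a * min j (2^t) := by
  set q := 2^t with hq
  rcases Nat.eq_zero_or_pos a with rfl | hA
  · haveI : IsEmpty (Fin 0 × Fin q) := by infer_instance
    haveI : Subsingleton (Fin 0 × Fin q → K) := by infer_instance
    rw [Module.finrank_zero_of_subsingleton (M := ↥(ker ((Sop K 0 q)^j)))]
    simp
  have hzero : (Sop K a q)^q = 0 := Sop_pow_eq_zero a q t ha le_rfl
  have hker1 : finrank K ↥(ker (Sop K a q)) = a := finrank_ker_Sop a q ha
  have htot : finrank K (Fin a × Fin q → K) = a * q := finrank_grid a q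
  -- upper bound
  have hub : ∀ i, finrank K ↥(ker ((Sop K a q)^i)) ≤ a * i := by
    intro i
    induction i with
    | zero => simp [Module.End.one_eq_id]
    | succ i ih =>
      have := JT2G.finrank_ker_pow_succ_le (Sop K a q) i
      rw [hker1] at this
      calc finrank K ↥(ker ((Sop K a q)^(i+1))) ≤ finrank K ↥(ker ((Sop K a q)^i)) + a := this
        _ ≤ a * i + a := by omega
        _ = a * (i+1) := by ring
  -- chain bound
  have hchain : ∀ d i, finrank K ↥(ker ((Sop K a q)^(i+d))) ≤ finrank K ↥(ker ((Sop K a q)^i)) + a * d := by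
    intro d
    induction d with
    | zero => simp
    | succ d ih =>
      intro i
      have h1 := JT2G.finrank_ker_pow_succ_le (Sop K a q) (i+d)
      rw [hker1] at h1
      have h2 := ih i
      calc finrank K ↥(ker ((Sop K a q)^(i+(d+1)))) = finrank K ↥(ker ((Sop K a q)^((i+d)+1))) := rfl
        _ ≤ finrank K ↥(ker ((Sop K a q)^(i+d))) + a := h1
        _ ≤ (finrank K ↥(ker ((Sop K a q)^i)) + a * d) + a := by omega
        _ = finrank K ↥(ker ((Sop K a q)^i)) + a * (d+1) := by ring
  have hq' : finrank K ↥(ker ((Sop K a q)^q)) = a * q := by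
    rw [hzero]
    show finrank K ↥(ker (0 : (Fin a × Fin q → K) →ₗ[K] (Fin a × Fin q → K))) = a * q
    rw [LinearMap.ker_zero, finrank_top, htot]
  by_cases hj : j ≤ q
  · have h1 := hub j
    have h2 := hchain (q - j) j
    rw [show j + (q - j) = q by omega, hq'] at h2
    have h3 : a * q = a * j + a * (q - j) := by
      rw [← Nat.mul_add]
      congr 1
      omega
    have : min j q = j := min_eq_left hj
    rw [this]
    omega
  · have hSj : (Sop K a q)^j = 0 := pow_eq_zero_of_le (by omega) hzero
    rw [hSj]
    show finrank K ↥(ker (0 : (Fin a × Fin q → K) →ₗ[K] (Fin a × Fin q → K))) = a * min j q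
    rw [LinearMap.ker_zero, finrank_top, htot, min_eq_right (by omega)]

/-- Transpose equivalence. -/
def transposeEquiv (K : Type*) [Field K] (a b : ℕ) :
    (Fin a × Fin b → K) ≃ₗ[K] (Fin b × Fin a → K) where
  toFun f := fun p => f (p.2, p.1)
  invFun f := fun p => f (p.2, p.1)
  map_add' f g := rfl
  map_smul' c f := rfl
  left_inv f := rfl
  right_inv f := rfl

lemma transpose_conj (a b : ℕ) :
    (Sop K b a).comp ((transposeEquiv K a b) : (Fin a × Fin b → K) →ₗ[K] (Fin b × Fin a → K)) =
    ((transposeEquiv K a b) : (Fin a × Fin b → K) →ₗ[K] (Fin b × Fin a → K)).comp (Sop K a b) := by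
  apply LinearMap.ext
  intro f
  funext p
  show Sop K b a (fun p => f (p.2, p.1)) p = Sop K a b f (p.2, p.1)
  rw [Sop_apply, Sop_apply]
  exact add_comm _ _

lemma finrank_ker_Sop_pow' [CharP K 2] (t a : ℕ) (ha : a ≤ 2^t) (j : ℕ) :
    finrank K ↥(ker ((Sop K (2^t) a)^j)) = a * min j (2^t) := by
  rw [JT2G.finrank_ker_pow_conj (transposeEquiv K a (2^t)) (transpose_conj a (2^t)) j]
  exact finrank_ker_Sop_pow t a ha j

lemma Sop_applyN (a b x y : ℕ) (hx : x < a) (hy : y < b) (f : Fin a × Fin b → K) :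
    Sop K a b f (⟨x, hx⟩, ⟨y, hy⟩) = (if h : x + 1 < a then f (⟨x+1, h⟩, ⟨y, hy⟩) else 0) +
      (if h : y + 1 < b then f (⟨x, hx⟩, ⟨y+1, h⟩) else 0) := rfl

/-- Extension by zero from a corner subgrid. -/
def padInj (K : Type*) [Field K] (a b a' b' : ℕ) :
    (Fin a' × Fin b' → K) →ₗ[K] (Fin a × Fin b → K) where
  toFun g := fun p => if h : (p.1 : ℕ) < a' ∧ (p.2 : ℕ) < b' then g (⟨p.1, h.1⟩, ⟨p.2, h.2⟩) else 0
  map_add' g g' := by funext p; by_cases h : (p.1:ℕ) < a' ∧ (p.2:ℕ) < b' <;> simp [h]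
  map_smul' c g := by funext p; by_cases h : (p.1:ℕ) < a' ∧ (p.2:ℕ) < b' <;> simp [h]

lemma padInj_applyN (a b a' b' x y : ℕ) (hx : x < a) (hy : y < b) (g : Fin a' × Fin b' → K) :
    padInj K a b a' b' g (⟨x, hx⟩, ⟨y, hy⟩) =
      if h : x < a' ∧ y < b' then g (⟨x, h.1⟩, ⟨y, h.2⟩) else 0 := rfl

/-- The corner submodule: functions vanishing outside the `a' × b'` corner. -/
def padMod (K : Type*) [Field K] (a b a' b' : ℕ) : Submodule K (Fin a × Fin b → K) where
  carrier := {f | ∀ p : Fin a × Fin b, a' ≤ (p.1 : ℕ) ∨ b' ≤ (p.2 : ℕ) → f p = 0}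
  zero_mem' := fun _ _ => rfl
  add_mem' := by intro f g hf hg p hp; simp only [Pi.add_apply, hf p hp, hg p hp, add_zero]
  smul_mem' := by intro c f hf p hp; simp only [Pi.smul_apply, hf p hp, smul_zero]

lemma mem_padMod {a b a' b' : ℕ} {f : Fin a × Fin b → K} :
    f ∈ padMod K a b a' b' ↔ ∀ p : Fin a × Fin b, a' ≤ (p.1 : ℕ) ∨ b' ≤ (p.2 : ℕ) → f p = 0 :=
  Iff.rfl

lemma padInj_injective (a b a' b' : ℕ) (ha : a' ≤ a) (hb : b' ≤ b) :
    Function.Injective (padInj K a b a' b') := by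
  intro g g' h
  funext p
  obtain ⟨⟨i, hi⟩, ⟨j, hj⟩⟩ := p
  have := congrFun h (⟨i, by omega⟩, ⟨j, by omega⟩)
  rw [padInj_applyN, padInj_applyN, dif_pos ⟨hi, hj⟩, dif_pos ⟨hi, hj⟩] at this
  exact this

lemma range_padInj (a b a' b' : ℕ) (ha : a' ≤ a) (hb : b' ≤ b) :
    LinearMap.range (padInj K a b a' b') = padMod K a b a' b' := by
  apply le_antisymm
  · rintro x ⟨g, rfl⟩
    intro p hp
    obtain ⟨⟨i, hi⟩, ⟨j, hj⟩⟩ := p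
    rw [padInj_applyN, dif_neg (by simp at hp ⊢; omega)]
  · intro f hf
    refine ⟨fun p => f (⟨(p.1:ℕ), by omega⟩, ⟨(p.2:ℕ), by omega⟩), ?_⟩
    funext p
    obtain ⟨⟨i, hi⟩, ⟨j, hj⟩⟩ := p
    rw [padInj_applyN]
    by_cases h : i < a' ∧ j < b'
    · rw [dif_pos h]
    · rw [dif_neg h]
      exact (hf _ (by simp; omega)).symm

lemma padInj_conj (a b a' b' : ℕ) (ha : a' ≤ a) (hb : b' ≤ b) :
    (Sop K a b).comp (padInj K a b a' b') = (padInj K a b a' b').comp (Sop K a' b') := by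
  apply LinearMap.ext
  intro g
  funext p
  obtain ⟨⟨i, hi⟩, ⟨j, hj⟩⟩ := p
  rw [LinearMap.comp_apply, LinearMap.comp_apply, Sop_applyN, padInj_applyN]
  by_cases h : i < a' ∧ j < b'
  · rw [dif_pos h, Sop_applyN]
    congr 1
    · by_cases h1 : i + 1 < a'
      · rw [dif_pos (by omega : i+1 < a), padInj_applyN, dif_pos ⟨h1, h.2⟩, dif_pos h1]
      · rw [dif_neg h1]
        by_cases h2 : i+1 < a
        · rw [dif_pos h2, padInj_applyN, dif_neg (by omega)]
        · rw [dif_neg h2]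
    · by_cases h1 : j + 1 < b'
      · rw [dif_pos (by omega : j+1 < b), padInj_applyN, dif_pos ⟨h.1, h1⟩, dif_pos h1]
      · rw [dif_neg h1]
        by_cases h2 : j+1 < b
        · rw [dif_pos h2, padInj_applyN, dif_neg (by omega)]
        · rw [dif_neg h2]
  · rw [dif_neg h]
    have z1 : ∀ (h1 : i+1 < a), padInj K a b a' b' g (⟨i+1, h1⟩, ⟨j, hj⟩) = 0 := by
      intro h1
      rw [padInj_applyN, dif_neg (by omega)]
    have z2 : ∀ (h2 : j+1 < b), padInj K a b a' b' g (⟨i, hi⟩, ⟨j+1, h2⟩) = 0 := by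
      intro h2
      rw [padInj_applyN, dif_neg (by omega)]
    by_cases h1 : i+1 < a <;> by_cases h2 : j+1 < b <;> simp [h1, h2, z1, z2]

/-- The projection onto the lower-right `n × n` corner. -/
def projCorner (K : Type*) [Field K] (q m n : ℕ) (hq : n + m = q) :
    (Fin q × Fin q → K) →ₗ[K] (Fin n × Fin n → K) where
  toFun f := fun p => f (⟨(p.1:ℕ) + m, by omega⟩, ⟨(p.2:ℕ) + m, by omega⟩)
  map_add' f g := rfl
  map_smul' c f := rfl

lemma projCorner_applyN (q m n : ℕ) (hq : n + m = q) (x y : ℕ) (hx : x < n) (hy : y < n)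
    (f : Fin q × Fin q → K) :
    projCorner K q m n hq f (⟨x, hx⟩, ⟨y, hy⟩) = f (⟨x + m, by omega⟩, ⟨y + m, by omega⟩) := rfl

lemma projCorner_surjective (q m n : ℕ) (hq : n + m = q) :
    Function.Surjective (projCorner K q m n hq) := by
  intro g
  refine ⟨fun p => if h : m ≤ (p.1:ℕ) ∧ m ≤ (p.2:ℕ) then
    g (⟨(p.1:ℕ) - m, by omega⟩, ⟨(p.2:ℕ) - m, by omega⟩) else 0, ?_⟩
  funext p
  obtain ⟨⟨i, hi⟩, ⟨j, hj⟩⟩ := p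
  rw [projCorner_applyN]
  show (if h : m ≤ i + m ∧ m ≤ j + m then g (⟨i + m - m, by omega⟩, ⟨j + m - m, by omega⟩) else 0)
      = g (⟨i, hi⟩, ⟨j, hj⟩)
  rw [dif_pos ⟨by omega, by omega⟩]
  congr 1
  apply Prod.ext <;> apply Fin.ext <;> simp

lemma projCorner_conj (q m n : ℕ) (hq : n + m = q) :
    (Sop K n n).comp (projCorner K q m n hq) = (projCorner K q m n hq).comp (Sop K q q) := by
  apply LinearMap.ext
  intro f
  funext p
  obtain ⟨⟨i, hi⟩, ⟨j, hj⟩⟩ := p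
  rw [LinearMap.comp_apply, LinearMap.comp_apply, Sop_applyN, projCorner_applyN, Sop_applyN]
  congr 1
  · by_cases h1 : i + 1 < n
    · rw [dif_pos h1, dif_pos (by omega : i + m + 1 < q), projCorner_applyN]
      congr 1
      apply Prod.ext <;> apply Fin.ext <;> simp <;> omega
    · rw [dif_neg h1, dif_neg (by omega)]
  · by_cases h2 : j + 1 < n
    · rw [dif_pos h2, dif_pos (by omega : j + m + 1 < q), projCorner_applyN]
      congr 1
      apply Prod.ext <;> apply Fin.ext <;> simp <;> omega
    · rw [dif_neg h2, dif_neg (by omega)]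

lemma ker_projCorner (q m n : ℕ) (hq : n + m = q) :
    LinearMap.ker (projCorner K q m n hq) = padMod K q q m q ⊔ padMod K q q q m := by
  apply le_antisymm
  · intro f hf
    have hf' : ∀ (i j : ℕ) (hi : i < q) (hj : j < q), m ≤ i → m ≤ j → f (⟨i, hi⟩, ⟨j, hj⟩) = 0 := by
      intro i j hi hj h1 h2
      have h0 := congrFun (LinearMap.mem_ker.mp hf) (⟨i - m, by omega⟩, ⟨j - m, by omega⟩)
      rw [projCorner_applyN] at h0
      rw [show (⟨i, hi⟩ : Fin q) = ⟨i - m + m, by omega⟩ from Fin.ext (by simp; omega),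
        show (⟨j, hj⟩ : Fin q) = ⟨j - m + m, by omega⟩ from Fin.ext (by simp; omega)]
      exact h0
    have hmem : (fun p : Fin q × Fin q => if (p.1:ℕ) < m then f p else 0) ∈ padMod K q q m q := by
      intro p hp
      rcases hp with hp | hp
      · simp only; rw [if_neg (by omega)]
      · exact absurd p.2.2 (by omega)
    have hmem2 : (fun p : Fin q × Fin q => if (p.1:ℕ) < m then 0 else f p) ∈ padMod K q q q m := by
      intro p hp
      rcases hp with hp | hp
      · exact absurd p.1.2 (by omega)
      · simp only
        by_cases h : (p.1:ℕ) < m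
        · rw [if_pos h]
        · rw [if_neg h]
          obtain ⟨⟨i, hi⟩, ⟨j, hj⟩⟩ := p
          exact hf' i j hi hj (by simpa using h) (by simpa using hp)
    have hdec : f = (fun p : Fin q × Fin q => if (p.1:ℕ) < m then f p else 0) +
        (fun p : Fin q × Fin q => if (p.1:ℕ) < m then 0 else f p) := by
      funext p
      by_cases h : (p.1:ℕ) < m <;> simp [h]
    rw [hdec]
    exact Submodule.add_mem_sup hmem hmem2
  · apply sup_le
    · intro f hf
      apply LinearMap.mem_ker.mpr
      funext p
      obtain ⟨⟨i, hi⟩, ⟨j, hj⟩⟩ := p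
      rw [projCorner_applyN]
      exact hf _ (Or.inl (by simp))
    · intro f hf
      apply LinearMap.mem_ker.mpr
      funext p
      obtain ⟨⟨i, hi⟩, ⟨j, hj⟩⟩ := p
      rw [projCorner_applyN]
      exact hf _ (Or.inr (by simp))

lemma padMod_inf (q m : ℕ) (hm : m ≤ q) :
    padMod K q q m q ⊓ padMod K q q q m = padMod K q q m m := by
  apply le_antisymm
  · rintro f ⟨hf1, hf2⟩
    intro p hp
    rcases hp with hp | hp
    · exact hf1 p (Or.inl hp)
    · exact hf2 p (Or.inr hp)
  · intro f hf
    constructor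
    · intro p hp
      rcases hp with hp | hp
      · exact hf p (Or.inl hp)
      · exact absurd p.2.2 (by omega)
    · intro p hp
      rcases hp with hp | hp
      · exact absurd p.1.2 (by omega)
      · exact hf p (Or.inr hp)


set_option maxHeartbeats 1000000 in
open Submodule in
lemma recursion [CharP K 2] (t n m : ℕ) (hq : n + m = 2^t) (j : ℕ) (hj : j ≤ 2^t) :
    finrank K ↥(ker ((Sop K n n)^j)) + 2*m*j
      = 2^t * j + finrank K ↥(ker ((Sop K m m)^j)) := by
  have hm : m ≤ 2^t := by omega
  set q := 2^t with hqdef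
  have hSq0 : (Sop K q q)^q = 0 := Sop_pow_eq_zero q q t le_rfl le_rfl
  have htot : finrank K (Fin q × Fin q → K) = q*q := finrank_grid q q
  set A := padMod K q q m q with hA
  set B := padMod K q q q m with hB
  -- A-side facts
  have hrangeA : range (padInj K q q m q) = A := range_padInj q q m q hm le_rfl
  have hconjA := padInj_conj (K := K) q q m q hm le_rfl
  have hAker : ∀ i, finrank K ↥(A ⊓ ker ((Sop K q q)^i)) = m * min i q := by
    intro i
    rw [← hrangeA, JT2G.finrank_inf_ker_pow (padInj_injective q q m q hm le_rfl) hconjA i]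
    exact finrank_ker_Sop_pow t m hm i
  have hrangeB : range (padInj K q q q m) = B := range_padInj q q q m le_rfl hm
  have hconjB := padInj_conj (K := K) q q q m le_rfl hm
  have hBker : ∀ i, finrank K ↥(B ⊓ ker ((Sop K q q)^i)) = m * min i q := by
    intro i
    rw [← hrangeB, JT2G.finrank_inf_ker_pow (padInj_injective q q q m le_rfl hm) hconjB i]
    exact finrank_ker_Sop_pow' t m hm i
  have hrangeC : range (padInj K q q m m) = A ⊓ B := by
    rw [range_padInj q q m m hm hm, hA, hB, padMod_inf q m hm]
  have hconjC := padInj_conj (K := K) q q m m hm hm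
  have hCker : ∀ i, finrank K ↥((A ⊓ B) ⊓ ker ((Sop K q q)^i))
      = finrank K ↥(ker ((Sop K m m)^i)) := by
    intro i
    rw [← hrangeC, JT2G.finrank_inf_ker_pow (padInj_injective q q m m hm hm) hconjC i]
  have hfrA : finrank K ↥A = m * q := by
    rw [← hrangeA, LinearMap.finrank_range_of_inj (padInj_injective q q m q hm le_rfl), finrank_grid]
  have hfrB : finrank K ↥B = q * m := by
    rw [← hrangeB, LinearMap.finrank_range_of_inj (padInj_injective q q q m le_rfl hm), finrank_grid]
  have hfrC : finrank K ↥(A ⊓ B) = m * m := by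
    rw [← hrangeC, LinearMap.finrank_range_of_inj (padInj_injective q q m m hm hm), finrank_grid]
  have hfrW : finrank K ↥(A ⊔ B) + m*m = m*q + q*m := by
    rw [← hfrA, ← hfrB, ← hfrC]
    exact Submodule.finrank_sup_add_finrank_inf_eq A B
  have hkerj : ∀ i, i ≤ q → finrank K ↥(ker ((Sop K q q)^i)) = q * i := by
    intro i hi
    have := finrank_ker_Sop_pow (K := K) t q le_rfl i
    rwa [min_eq_left hi] at this
  -- range S^j = ker S^(q-j)
  have hrk : finrank K ↥(range ((Sop K q q)^j)) + q*j = q*q := by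
    have h0 := LinearMap.finrank_range_add_finrank_ker ((Sop K q q)^j)
    rw [hkerj j hj, htot] at h0
    exact h0
  have hri : range ((Sop K q q)^j) = ker ((Sop K q q)^(q-j)) := by
    apply Submodule.eq_of_le_of_finrank_eq
    · rintro x ⟨y, rfl⟩
      rw [LinearMap.mem_ker]
      have h1 : ((Sop K q q)^(q-j)) (((Sop K q q)^j) y) = ((Sop K q q)^((q-j)+j)) y := by
        rw [pow_add]
        rfl
      rw [h1, show (q-j)+j = q from by omega, hSq0]
      rfl
    · have h2 := hkerj (q-j) (by omega)
      have h3 : q*(q-j) + q*j = q*q := by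
        rw [← Nat.mul_add]
        congr 1
        omega
      omega
  -- invariance
  have hmapA : ∀ i, Submodule.map ((Sop K q q)^i) A ≤ A := by
    intro i
    rw [← hrangeA, ← LinearMap.range_comp, JT2G.comp_pow hconjA i, LinearMap.range_comp]
    exact le_of_le_of_eq (Submodule.map_mono le_top) (Submodule.map_top _)
  have hmapB : ∀ i, Submodule.map ((Sop K q q)^i) B ≤ B := by
    intro i
    rw [← hrangeB, ← LinearMap.range_comp, JT2G.comp_pow hconjB i, LinearMap.range_comp]
    exact le_of_le_of_eq (Submodule.map_mono le_top) (Submodule.map_top _)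
  -- images of A and B under S^(q-j)
  have hker_le : ∀ (p : Submodule K (Fin q × Fin q → K)),
      Submodule.map ((Sop K q q)^(q-j)) p ≤ ker ((Sop K q q)^j) := by
    intro p
    rintro x ⟨y, hy, rfl⟩
    rw [LinearMap.mem_ker]
    have h1 : ((Sop K q q)^j) (((Sop K q q)^(q-j)) y) = ((Sop K q q)^(j+(q-j))) y := by
      rw [pow_add]
      rfl
    rw [h1, show j+(q-j) = q from by omega, hSq0]
    rfl
  have hmulA : m*q = m*j + m*(q-j) := by
    rw [← Nat.mul_add]
    congr 1
    omega
  have hcomm1 : q*m = m*q := Nat.mul_comm q m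
  have hmapAeq : Submodule.map ((Sop K q q)^(q-j)) A = A ⊓ ker ((Sop K q q)^j) := by
    apply Submodule.eq_of_le_of_finrank_eq
    · exact le_inf (hmapA (q-j)) (hker_le A)
    · have h0 := JT2G.finrank_inf_ker_add_finrank_map ((Sop K q q)^(q-j)) A
      rw [hfrA, hAker (q-j)] at h0
      rw [hAker j, min_eq_left hj]
      rw [min_eq_left (by omega : q - j ≤ q)] at h0
      omega
  have hmapBeq : Submodule.map ((Sop K q q)^(q-j)) B = B ⊓ ker ((Sop K q q)^j) := by
    apply Submodule.eq_of_le_of_finrank_eq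
    · exact le_inf (hmapB (q-j)) (hker_le B)
    · have h0 := JT2G.finrank_inf_ker_add_finrank_map ((Sop K q q)^(q-j)) B
      rw [hfrB, hBker (q-j)] at h0
      rw [hBker j, min_eq_left hj]
      rw [min_eq_left (by omega : q - j ≤ q)] at h0
      omega
  have hinter : (A ⊓ ker ((Sop K q q)^j)) ⊓ (B ⊓ ker ((Sop K q q)^j))
      = (A ⊓ B) ⊓ ker ((Sop K q q)^j) := by
    ext x
    simp only [Submodule.mem_inf]
    tauto
  have hfrmapW : finrank K ↥(Submodule.map ((Sop K q q)^(q-j)) (A ⊔ B))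
      + finrank K ↥(ker ((Sop K m m)^j)) = m*j + m*j := by
    rw [Submodule.map_sup, hmapAeq, hmapBeq]
    have h0 := Submodule.finrank_sup_add_finrank_inf_eq (A ⊓ ker ((Sop K q q)^j))
      (B ⊓ ker ((Sop K q q)^j))
    rw [hinter, hCker j, hAker j, hBker j, min_eq_left hj] at h0
    exact h0
  have hWk := JT2G.finrank_inf_ker_add_finrank_map ((Sop K q q)^(q-j)) (A ⊔ B)
  have hcom := JT2G.finrank_comap ((Sop K q q)^j) (A ⊔ B)
  -- the quotient step
  have hkerpi : ker (projCorner K q m n hq) = A ⊔ B := ker_projCorner q m n hq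
  have hpc := JT2G.comp_pow (projCorner_conj (K := K) q m n hq) j
  have happly : ∀ f, ((Sop K n n)^j) (projCorner K q m n hq f)
      = projCorner K q m n hq (((Sop K q q)^j) f) := by
    intro f
    have := congrArg (fun ψ : (Fin q × Fin q → K) →ₗ[K] (Fin n × Fin n → K) => ψ f) hpc
    simpa using this
  have hWle : A ⊔ B ≤ Submodule.comap ((Sop K q q)^j) (A ⊔ B) := by
    intro f hf
    show ((Sop K q q)^j) f ∈ A ⊔ B
    rw [← hkerpi] at hf ⊢
    rw [LinearMap.mem_ker] at hf
    rw [LinearMap.mem_ker, ← happly f, hf, map_zero]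
  have hquot : ker ((Sop K n n)^j)
      = Submodule.map (projCorner K q m n hq) (Submodule.comap ((Sop K q q)^j) (A ⊔ B)) := by
    apply le_antisymm
    · intro x hx
      obtain ⟨f, rfl⟩ := projCorner_surjective q m n hq x
      refine ⟨f, ?_, rfl⟩
      have h2 : projCorner K q m n hq (((Sop K q q)^j) f) = 0 := by
        rw [← happly f]
        exact LinearMap.mem_ker.mp hx
      show ((Sop K q q)^j) f ∈ A ⊔ B
      rw [← hkerpi]
      exact LinearMap.mem_ker.mpr h2
    · rintro x ⟨f, hf, rfl⟩
      have hf2 : ((Sop K q q)^j) f ∈ A ⊔ B := hf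
      rw [LinearMap.mem_ker, happly f]
      rw [← hkerpi] at hf2
      exact LinearMap.mem_ker.mp hf2
  have hfrquot : finrank K ↥(ker ((Sop K n n)^j)) + finrank K ↥(A ⊔ B)
      = finrank K ↥(Submodule.comap ((Sop K q q)^j) (A ⊔ B)) := by
    have h0 := JT2G.finrank_inf_ker_add_finrank_map (projCorner K q m n hq)
      (Submodule.comap ((Sop K q q)^j) (A ⊔ B))
    rw [hkerpi] at h0
    have h1 : Submodule.comap ((Sop K q q)^j) (A ⊔ B) ⊓ (A ⊔ B) = A ⊔ B :=
      inf_eq_right.mpr hWle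
    rw [h1, ← hquot] at h0
    omega
  -- assemble
  rw [hri] at hcom
  rw [hkerj j hj] at hcom
  have hglue : 2*m*j = m*j + m*j := by ring
  omega

end JT2
namespace JT2C

/-- Tail alternating sum. -/
def Tsum (β : ℕ → ℕ) (r k : ℕ) : ℤ :=
  ∑ d ∈ Finset.range (r - k), (-1:ℤ)^d * 2^(β (k + d))

lemma Tsum_end (β : ℕ → ℕ) (r k : ℕ) (h : r ≤ k) : Tsum β r k = 0 := by
  unfold Tsum
  rw [show r - k = 0 from by omega]
  simp

lemma Tsum_succ (β : ℕ → ℕ) (r k : ℕ) (hk : k < r) :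
    Tsum β r k = 2^(β k) - Tsum β r (k+1) := by
  unfold Tsum
  rw [show r - k = (r - (k+1)) + 1 from by omega, Finset.sum_range_succ']
  have h2 : ∀ i, (-1:ℤ)^(i+1) * 2^(β (k+(i+1))) = -((-1)^i * 2^(β ((k+1)+i))) := by
    intro i
    rw [show k+(i+1) = (k+1)+i from by omega, pow_succ]
    ring
  rw [Finset.sum_congr rfl (fun i _ => h2 i), Finset.sum_neg_distrib]
  simp only [pow_zero, one_mul, add_zero]
  ring

lemma Tsum_zero (n r : ℕ) (β : ℕ → ℕ) (h : IsAltExpansion n r β) :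
    (n : ℤ) = Tsum β r 0 := by
  rw [h.2]
  unfold Tsum
  rw [Nat.sub_zero]
  exact Finset.sum_congr rfl (fun i _ => by rw [Nat.zero_add])

lemma Tsum_bounds (β : ℕ → ℕ) (r : ℕ) (hdec : ∀ i j : ℕ, i < j → j < r → β j < β i) :
    ∀ s k, r - k ≤ s → k < r → 0 < Tsum β r k ∧ Tsum β r k ≤ 2^(β k) := by
  intro s
  induction s with
  | zero => intro k hs hk; omega
  | succ s ihs =>
    intro k hs hk
    rw [Tsum_succ β r k hk]
    by_cases hk1 : k + 1 < r
    · have ih := ihs (k+1) (by omega) hk1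
      have hbk : β (k+1) < β k := hdec k (k+1) (by omega) hk1
      have hpow : (2:ℤ)^(β (k+1)) * 2 ≤ 2^(β k) := by
        rw [← pow_succ]
        exact pow_le_pow_right₀ (by norm_num) (by omega)
      have hpos : (0:ℤ) < 2^(β (k+1)) := by positivity
      constructor <;> linarith [ih.1, ih.2]
    · rw [Tsum_end β r (k+1) (by omega)]
      have hpos : (0:ℤ) < 2^(β k) := by positivity
      constructor <;> linarith

lemma Tsum_double (β : ℕ → ℕ) (r : ℕ) (hdec : ∀ i j : ℕ, i < j → j < r → β j < β i)
    (k : ℕ) (hk : k < r) : 0 ≤ Tsum β r (k+1) ∧ 2 * Tsum β r (k+1) ≤ 2^(β k) := by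
  by_cases hk1 : k + 1 < r
  · have h := Tsum_bounds β r hdec (r - (k+1)) (k+1) le_rfl hk1
    have hbk : β (k+1) < β k := hdec k (k+1) (by omega) hk1
    have hpow : (2:ℤ)^(β (k+1)) * 2 ≤ 2^(β k) := by
      rw [← pow_succ]
      exact pow_le_pow_right₀ (by norm_num) (by omega)
    constructor <;> linarith [h.1, h.2]
  · rw [Tsum_end β r (k+1) (by omega)]
    have hpos : (0:ℤ) < 2^(β k) := by positivity
    constructor <;> linarith

/-- The multiplicity `d_k` as in the theorem. -/
def dTerm (β : ℕ → ℕ) (r k : ℕ) : ℤ :=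
  2 ^ (β k) + ∑ i ∈ Finset.Ico (k + 1) r, (-1 : ℤ) ^ (k + i) * 2 ^ (β i + 1)

lemma neg_one_pow_odd (k d : ℕ) : (-1:ℤ)^(2*k+1+d) = -(-1:ℤ)^d := by
  rw [pow_add, pow_add, pow_mul]
  norm_num

lemma dTerm_eq (β : ℕ → ℕ) (r k : ℕ) :
    dTerm β r k = 2^(β k) - 2 * Tsum β r (k+1) := by
  unfold dTerm Tsum
  have h1 : ∑ i ∈ Finset.Ico (k + 1) r, (-1 : ℤ) ^ (k + i) * 2 ^ (β i + 1)
      = ∑ d ∈ Finset.range (r - (k+1)), (-1 : ℤ) ^ (k + (k+1+d)) * 2 ^ (β (k+1+d) + 1) := by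
    rw [Finset.sum_Ico_eq_sum_range]
  rw [h1]
  have h2 : ∀ d, (-1 : ℤ) ^ (k + (k+1+d)) * 2 ^ (β (k+1+d) + 1)
      = -2 * ((-1:ℤ)^d * 2^(β ((k+1) + d))) := by
    intro d
    rw [show k + (k+1+d) = 2*k+1+d from by omega, neg_one_pow_odd, pow_succ]
    ring
  rw [Finset.sum_congr rfl (fun d _ => h2 d), ← Finset.mul_sum]
  ring

lemma dTerm_shift (β : ℕ → ℕ) (r k : ℕ) :
    dTerm β r (k+1) = dTerm (fun i => β (i+1)) (r-1) k := by
  unfold dTerm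
  have h1 : ∑ i ∈ Finset.Ico (k + 1 + 1) r, (-1 : ℤ) ^ (k + 1 + i) * 2 ^ (β i + 1)
      = ∑ d ∈ Finset.range (r - (k+2)), (-1 : ℤ) ^ (k+1+(k+2+d)) * 2 ^ (β (k+2+d) + 1) := by
    rw [Finset.sum_Ico_eq_sum_range]
  have h2 : ∑ i ∈ Finset.Ico (k + 1) (r-1), (-1 : ℤ) ^ (k + i) * 2 ^ (β (i+1) + 1)
      = ∑ d ∈ Finset.range ((r-1) - (k+1)), (-1 : ℤ) ^ (k+(k+1+d)) * 2 ^ (β (k+1+d+1) + 1) := by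
    rw [Finset.sum_Ico_eq_sum_range]
  simp only at h1 h2 ⊢
  rw [h1, h2, show (r-1) - (k+1) = r - (k+2) from by omega]
  congr 1
  apply Finset.sum_congr rfl
  intro d _
  rw [show k+1+(k+2+d) = 2*(k+1)+1+d from by omega, neg_one_pow_odd,
    show k+(k+1+d) = 2*k+1+d from by omega, neg_one_pow_odd,
    show k+1+d+1 = k+2+d from by omega]

lemma Tsum_one (β : ℕ → ℕ) (r : ℕ) :
    Tsum β r 1 = ∑ i ∈ Finset.range (r-1), (-1:ℤ)^i * 2^(β (i+1)) := by
  unfold Tsum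
  exact Finset.sum_congr rfl (fun i _ => by rw [show 1 + i = i + 1 from by omega])

lemma cons_ones_step (n r : ℕ) (β : ℕ → ℕ) (hn : 0 < n) (h : IsConsOnesExpansion n r β) :
    1 ≤ r ∧
    n + (Tsum β r 1).toNat = 2^(β 0) ∧
    (Tsum β r 1).toNat < n ∧
    IsConsOnesExpansion ((Tsum β r 1).toNat) (r-1) (fun i => β (i+1)) := by
  obtain ⟨⟨hdec, hsum⟩, hmin⟩ := h
  have hr1 : 1 ≤ r := by
    by_contra hr
    have : r = 0 := by omega
    subst this
    simp at hsum
    omega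
  have hT0 : (n:ℤ) = Tsum β r 0 := Tsum_zero n r β ⟨hdec, hsum⟩
  have hT0succ : Tsum β r 0 = 2^(β 0) - Tsum β r 1 := Tsum_succ β r 0 (by omega)
  have hdub : 0 ≤ Tsum β r 1 ∧ 2 * Tsum β r 1 ≤ 2^(β 0) := Tsum_double β r hdec 0 (by omega)
  -- strict inequality 2*T1 < 2^(β 0)
  have hstrict : 2 * Tsum β r 1 < 2^(β 0) := by
    rcases lt_or_eq_of_le hdub.2 with h | heq
    · exact h
    · exfalso
      -- equality forces r = 2 and n = 2^(β 1)
      have hr2 : 2 ≤ r := by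
        by_contra hr2
        have hr1' : r = 1 := by omega
        rw [Tsum_end β r 1 (by omega)] at heq
        have : (0:ℤ) < 2^(β 0) := by positivity
        omega
      have hb01 : β 1 < β 0 := hdec 0 1 (by omega) (by omega)
      have hT1b := Tsum_bounds β r hdec (r-1) 1 (by omega) (by omega)
      have hT1succ : Tsum β r 1 = 2^(β 1) - Tsum β r 2 := Tsum_succ β r 1 (by omega)
      have hpow : (2:ℤ)^(β 1) * 2 ≤ 2^(β 0) := by
        rw [← pow_succ]
        exact pow_le_pow_right₀ (by norm_num) (by omega)
      have hT1eq : Tsum β r 1 = 2^(β 1) := by linarith [hT1b.1, hT1b.2]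
      have hT2 : Tsum β r 2 = 0 := by linarith
      have hr2' : r = 2 := by
        by_contra hr3
        have := Tsum_bounds β r hdec (r-2) 2 (by omega) (by omega)
        omega
      -- n = 2^(β 1), so there is an expansion of length 1
      have hn1 : (n:ℤ) = 2^(β 1) := by
        rw [hT0, hT0succ]
        omega
      have halt : IsAltExpansion n 1 (fun _ => β 1) := by
        constructor
        · intro i j hij hj
          omega
        · simp [hn1]
      have := hmin 1 (fun _ => β 1) halt
      omega
  have hT1nonneg := hdub.1
  set m := (Tsum β r 1).toNat with hm
  have hmz : (m:ℤ) = Tsum β r 1 := Int.toNat_of_nonneg hT1nonneg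
  have hq : n + m = 2^(β 0) := by
    have : (n:ℤ) + (m:ℤ) = ((2^(β 0) : ℕ) : ℤ) := by
      rw [hmz, hT0, hT0succ]
      push_cast
      ring
    exact_mod_cast this
  have hmn : m < n := by
    have : 2*(m:ℤ) < 2^(β 0) := by rw [hmz]; exact hstrict
    have h2 : ((2^(β 0) : ℕ) : ℤ) = (2:ℤ)^(β 0) := by push_cast; ring
    omega
  refine ⟨hr1, hq, hmn, ?_⟩
  constructor
  · constructor
    · intro i j hij hj
      exact hdec (i+1) (j+1) (by omega) (by omega)
    · rw [hmz, Tsum_one]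
  · -- minimality of the tail expansion
    intro r'' β'' halt''
    rcases Nat.eq_zero_or_pos m with hm0 | hmpos
    · -- then r ≤ 1
      have : r ≤ 1 := by
        by_contra hr2
        have := Tsum_bounds β r hdec (r-1) 1 (by omega) (by omega)
        omega
      omega
    · have hr''pos : 1 ≤ r'' := by
        by_contra h0
        have : r'' = 0 := by omega
        subst this
        have hs := halt''.2
        rw [Finset.range_zero, Finset.sum_empty] at hs
        omega
      -- leading exponent bound: 2^(β'' 0) ≤ 2*m
      have hT0'' : (m:ℤ) = Tsum β'' r'' 0 := Tsum_zero m r'' β'' halt''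
      have hT0succ'' : Tsum β'' r'' 0 = 2^(β'' 0) - Tsum β'' r'' 1 :=
        Tsum_succ β'' r'' 0 (by omega)
      have hdub'' : 0 ≤ Tsum β'' r'' 1 ∧ 2 * Tsum β'' r'' 1 ≤ 2^(β'' 0) := Tsum_double β'' r'' halt''.1 0 (by omega)
      have hlead : (2:ℤ)^(β'' 0) ≤ 2*(m:ℤ) := by omega
      have hblt : β'' 0 < β 0 := by
        by_contra hb
        have : (2:ℤ)^(β 0) ≤ 2^(β'' 0) := pow_le_pow_right₀ (by norm_num) (by omega)
        omega
      -- extend to an expansion of n of length r''+1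
      set γ : ℕ → ℕ := fun i => if i = 0 then β 0 else β'' (i-1) with hγ
      have haltn : IsAltExpansion n (r''+1) γ := by
        constructor
        · intro i j hij hj
          rcases Nat.eq_zero_or_pos i with rfl | hi
          · simp only [hγ, if_pos rfl, if_neg (by omega : j ≠ 0)]
            rcases Nat.eq_zero_or_pos (j-1) with hj1 | hj1
            · rw [hj1]
              omega
            · have := halt''.1 0 (j-1) (by omega) (by omega)
              omega
          · simp only [hγ, if_neg (by omega : i ≠ 0), if_neg (by omega : j ≠ 0)]
            exact halt''.1 (i-1) (j-1) (by omega) (by omega)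
        · rw [Finset.sum_range_succ']
          simp only [hγ, if_pos rfl, pow_zero, one_mul]
          have h2 : ∀ i, (-1:ℤ)^(i+1) * 2^(γ (i+1)) = -((-1)^i * 2^(β'' i)) := by
            intro i
            simp only [hγ, if_neg (by omega : i + 1 ≠ 0), Nat.add_sub_cancel, pow_succ]
            ring
          rw [Finset.sum_congr rfl (fun i _ => h2 i), Finset.sum_neg_distrib]
          rw [← halt''.2]
          have : ((2^(β 0):ℕ) : ℤ) = (2:ℤ)^(β 0) := by push_cast; ring
          omega
      have := hmin (r''+1) γ haltn
      omega

end JT2C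

open Module LinearMap in
lemma main_count {K : Type*} [Field K] [CharP K 2] :
    ∀ n r (β : ℕ → ℕ), IsConsOnesExpansion n r β → ∀ j : ℕ,
      finrank K ↥(ker ((JT2.Sop K n n)^j))
        = ∑ k ∈ Finset.range r, (JT2C.dTerm β r k).toNat * min (2^(β k)) j := by
  intro n
  induction n using Nat.strong_induction_on with
  | _ n ih =>
    intro r β hexp j
    rcases Nat.eq_zero_or_pos n with rfl | hn
    · have hr0 : r = 0 := by
        have := hexp.2 0 (fun _ => 0) ⟨by omega, by simp⟩
        omega
      subst hr0
      haveI : IsEmpty (Fin 0 × Fin 0) := by infer_instance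
      haveI : Subsingleton (Fin 0 × Fin 0 → K) := by infer_instance
      rw [Module.finrank_zero_of_subsingleton (M := ↥(ker ((JT2.Sop K 0 0)^j)))]
      simp
    · obtain ⟨hr1, hq, hmn, htail⟩ := JT2C.cons_ones_step n r β hn hexp
      set m := (JT2C.Tsum β r 1).toNat with hmdef
      have hIH := ih m hmn (r-1) (fun i => β (i+1)) htail
      have hT1nn : 0 ≤ JT2C.Tsum β r 1 := (JT2C.Tsum_double β r hexp.1.1 0 (by omega)).1
      have hdub : 2 * JT2C.Tsum β r 1 ≤ 2^(β 0) :=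
        (JT2C.Tsum_double β r hexp.1.1 0 (by omega)).2
      have hd0 : JT2C.dTerm β r 0 = 2^(β 0) - 2 * JT2C.Tsum β r 1 := JT2C.dTerm_eq β r 0
      have hc0 : (JT2C.dTerm β r 0).toNat + 2*m = 2^(β 0) := by
        have h2 : (m:ℤ) = JT2C.Tsum β r 1 := Int.toNat_of_nonneg hT1nn
        have h3 : ((JT2C.dTerm β r 0).toNat : ℤ) = JT2C.dTerm β r 0 :=
          Int.toNat_of_nonneg (by omega)
        have h4 : (((2:ℕ)^(β 0) : ℕ) : ℤ) = (2:ℤ)^(β 0) := by push_cast; ring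
        omega
      have key : ∀ j, j ≤ 2^(β 0) → finrank K ↥(ker ((JT2.Sop K n n)^j))
          = ∑ k ∈ Finset.range r, (JT2C.dTerm β r k).toNat * min (2^(β k)) j := by
        intro j hj
        have hrec := JT2.recursion (K := K) (β 0) n m hq j hj
        have hsplit : ∑ k ∈ Finset.range r, (JT2C.dTerm β r k).toNat * min (2^(β k)) j
            = (∑ k ∈ Finset.range (r-1), (JT2C.dTerm β r (k+1)).toNat * min (2^(β (k+1))) j)
              + (JT2C.dTerm β r 0).toNat * min (2^(β 0)) j := by
          rw [show r = (r-1)+1 from by omega]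
          exact Finset.sum_range_succ' _ (r-1)
        rw [hsplit]
        have hterm : ∀ k, (JT2C.dTerm β r (k+1)).toNat * min (2^(β (k+1))) j
            = (JT2C.dTerm (fun i => β (i+1)) (r-1) k).toNat * min (2^((fun i => β (i+1)) k)) j := by
          intro k
          rw [JT2C.dTerm_shift β r k]
        rw [Finset.sum_congr rfl (fun k _ => hterm k), ← hIH j]
        rw [min_eq_right hj]
        have hmul : (JT2C.dTerm β r 0).toNat * j + 2*m*j = 2^(β 0) * j := by
          have := Nat.add_mul ((JT2C.dTerm β r 0).toNat) (2*m) j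
          rw [hc0] at this
          omega
        omega
      by_cases hj : j ≤ 2^(β 0)
      · exact key j hj
      · have hzn : (JT2.Sop K n n)^(2^(β 0)) = 0 :=
          JT2.Sop_pow_eq_zero n n (β 0) (by omega) (by omega)
        have hz : (JT2.Sop K n n)^j = 0 := pow_eq_zero_of_le (by omega) hzn
        have h1 : finrank K ↥(ker ((JT2.Sop K n n)^j))
            = finrank K ↥(ker ((JT2.Sop K n n)^(2^(β 0)))) := by
          rw [hz, hzn]
        rw [h1, key (2^(β 0)) le_rfl]
        apply Finset.sum_congr rfl
        intro k hk
        congr 1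
        have hbk : β k ≤ β 0 := by
          rcases Nat.eq_zero_or_pos k with rfl | hk0
          · exact le_rfl
          · exact le_of_lt (hexp.1.1 0 k hk0 (Finset.mem_range.mp hk))
        have hple : 2^(β k) ≤ 2^(β 0) := Nat.pow_le_pow_right (by norm_num) hbk
        omega

namespace JT2T

noncomputable def tensorEquiv (K : Type*) [Field K] (n : ℕ) :
    ((Fin n → K) ⊗[K] (Fin n → K)) ≃ₗ[K] (Fin n × Fin n → K) :=
  ((Pi.basisFun K (Fin n)).tensorProduct (Pi.basisFun K (Fin n))).equivFun

lemma tensorEquiv_tmul {K : Type*} [Field K] (n : ℕ) (x y : Fin n → K) (p : Fin n × Fin n) :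
    tensorEquiv K n (x ⊗ₜ[K] y) p = x p.1 * y p.2 := by
  obtain ⟨i, j⟩ := p
  unfold tensorEquiv
  rw [Module.Basis.equivFun_apply, Module.Basis.tensorProduct_repr_tmul_apply]
  simp [smul_eq_mul, mul_comm]

lemma tensor_conj (K : Type*) [Field K] (n : ℕ) :
    (JT2.Sop K n n).comp (tensorEquiv K n).toLinearMap
      = (tensorEquiv K n).toLinearMap.comp (tensorSquareAction K n) := by
  apply TensorProduct.ext'
  intro x y
  rw [LinearMap.comp_apply, LinearMap.comp_apply]
  have hT : tensorSquareAction K n (x ⊗ₜ[K] y) =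
      (jordanShift K n x) ⊗ₜ[K] y + x ⊗ₜ[K] (jordanShift K n y) := by
    unfold tensorSquareAction
    rw [LinearMap.add_apply, LinearMap.rTensor_tmul, LinearMap.lTensor_tmul]
  rw [hT, map_add]
  funext p
  obtain ⟨⟨i, hi⟩, ⟨j, hj⟩⟩ := p
  simp only [LinearEquiv.coe_coe]
  rw [JT2.Sop_applyN, Pi.add_apply, tensorEquiv_tmul, tensorEquiv_tmul]
  show _ = (if h : i + 1 < n then x ⟨i+1, h⟩ else 0) * y ⟨j, hj⟩
      + x ⟨i, hi⟩ * (if h : j + 1 < n then y ⟨j+1, h⟩ else 0)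
  by_cases h1 : i+1 < n <;> by_cases h2 : j+1 < n <;>
    simp [h1, h2, tensorEquiv_tmul]

lemma map_sum_replicate (r j : ℕ) (c s : ℕ → ℕ) :
    ((∑ k ∈ Finset.range r, Multiset.replicate (c k) (s k)).map (fun x => min x j)).sum
      = ∑ k ∈ Finset.range r, (c k) * min (s k) j := by
  induction r with
  | zero => simp
  | succ r ihr =>
    rw [Finset.sum_range_succ, Finset.sum_range_succ, Multiset.map_add, Multiset.sum_add, ihr,
      Multiset.map_replicate, Multiset.sum_replicate, smul_eq_mul]

end JT2T

end JTAux

variable (K)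


/-- Jordan type of `e ⊗ id + id ⊗ e` on `W_n ⊗ W_n` in characteristic two: for each
`k` (0-indexed) there are exactly `d_k = 2^{β_k} + ∑_{i>k} (-1)^{k+i} 2^{β_i + 1}`
Jordan blocks of size `2^{β_k}`, and no other blocks. -/
theorem jordanType_tensorSquare [CharP K 2] (n r : ℕ) (hn : 0 < n) (β : ℕ → ℕ)
    (h : IsConsOnesExpansion n r β) :
    HasJordanType (tensorSquareAction K n)
      (∑ k ∈ Finset.range r,
        Multiset.replicate
          ((2 ^ (β k) + ∑ i ∈ Finset.Ico (k + 1) r,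
            (-1 : ℤ) ^ (k + i) * 2 ^ (β i + 1)).toNat)
          (2 ^ (β k))) := by
  intro j
  have htrans := JT2G.finrank_ker_pow_conj (JT2T.tensorEquiv K n) (JT2T.tensor_conj K n) j
  rw [← htrans, JT2T.map_sum_replicate]
  exact main_count n r β h j

end
end

section
/- Let K be a field of characteristic 2 and let e act on W_n = K^n as a single nilpotent Jordan block. Then the induced nilpotent action of e on S²(W_n) has exactly n Jordan blocks; equivalently, the kernel of e acting on S²(W_n) is n-dimensional. -/
open TensorProduct

noncomputable section

variable (K : Type*) [Field K]

/-- The kernel of the natural surjection `V ⊗ V → Λ²(V)`, namely the span of the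
vectors `v ⊗ v`.  In characteristic two `Λ²(V) ≅ (V ⊗ V) / altSubmodule K V`. -/
def altSubmodule (V : Type*) [AddCommGroup V] [Module K V] : Submodule K (V ⊗[K] V) :=
  Submodule.span K {x | ∃ v : V, x = v ⊗ₜ[K] v}

/-- The kernel of the natural surjection `V ⊗ V → S²(V)`, namely the span of the
vectors `v ⊗ w - w ⊗ v`.  Thus `S²(V) ≅ (V ⊗ V) / symSubmodule K V`. -/
def symSubmodule (V : Type*) [AddCommGroup V] [Module K V] : Submodule K (V ⊗[K] V) :=
  Submodule.span K {x | ∃ v w : V, x = v ⊗ₜ[K] w - w ⊗ₜ[K] v}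

/-! Auxiliary definitions and lemmas -/

/-- Index type for the upper triangle (with diagonal). -/
abbrev UT (n : ℕ) := {p : Fin n × Fin n // p.1 ≤ p.2}

/-- Standard basis of `K^n ⊗ K^n`. -/
def tB (n : ℕ) : Module.Basis (Fin n × Fin n) K ((Fin n → K) ⊗[K] (Fin n → K)) :=
  (Pi.basisFun K (Fin n)).tensorProduct (Pi.basisFun K (Fin n))

/-- Symmetrized coordinates: kills exactly `symSubmodule`. -/
def Phi (n : ℕ) : ((Fin n → K) ⊗[K] (Fin n → K)) →ₗ[K] (UT n → K) where
  toFun x s := if s.1.1 = s.1.2 then (tB K n).repr x s.1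
    else (tB K n).repr x s.1 + (tB K n).repr x (s.1.2, s.1.1)
  map_add' x y := by funext s; by_cases h : s.1.1 = s.1.2 <;> simp [h] <;> ring
  map_smul' c x := by funext s; by_cases h : s.1.1 = s.1.2 <;> simp [h] <;> ring

/-- The induced Jordan-block action on upper-triangular coordinates. -/
def Fmap (n : ℕ) : (UT n → K) →ₗ[K] (UT n → K) where
  toFun d s :=
    (if h : (s.1.1 : ℕ) + 1 < (s.1.2 : ℕ) then
      d ⟨(⟨(s.1.1 : ℕ) + 1, by omega⟩, s.1.2), by rw [Fin.le_def]; exact le_of_lt h⟩ else 0) +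
    (if h : (s.1.2 : ℕ) + 1 < n then
      d ⟨(s.1.1, ⟨(s.1.2 : ℕ) + 1, h⟩), by rw [Fin.le_def]; exact le_trans (Fin.le_def.mp s.2) (Nat.le_succ _)⟩ else 0)
  map_add' x y := by
    funext s
    by_cases h1 : (s.1.1 : ℕ) + 1 < (s.1.2 : ℕ) <;> by_cases h2 : (s.1.2 : ℕ) + 1 < n <;>
      simp [h1, h2] <;> ring
  map_smul' c x := by
    funext s
    by_cases h1 : (s.1.1 : ℕ) + 1 < (s.1.2 : ℕ) <;> by_cases h2 : (s.1.2 : ℕ) + 1 < n <;>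
      simp [h1, h2] <;> ring

lemma tB_repr_tmul (n : ℕ) (v w : Fin n → K) (p : Fin n × Fin n) :
    (tB K n).repr (v ⊗ₜ[K] w) p = v p.1 * w p.2 := by
  obtain ⟨i, j⟩ := p
  simp [tB, Module.Basis.tensorProduct_repr_tmul_apply, Pi.basisFun_repr, smul_eq_mul, mul_comm]

lemma symSubmodule_eq_ker (n : ℕ) :
    symSubmodule K (Fin n → K) = LinearMap.ker (Phi K n) := by
  apply le_antisymm
  · rw [symSubmodule, Submodule.span_le]
    rintro x ⟨v, w, rfl⟩
    simp only [SetLike.mem_coe, LinearMap.mem_ker]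
    funext s
    obtain ⟨⟨i, j⟩, hij⟩ := s
    by_cases h : i = j
    · subst h; simp [Phi, map_sub, tB_repr_tmul]; ring
    · simp [Phi, h, map_sub, tB_repr_tmul]; ring
  · intro x hx
    rw [LinearMap.mem_ker] at hx
    have hd : ∀ i : Fin n, (tB K n).repr x (i, i) = 0 := by
      intro i
      have := congrFun hx ⟨(i, i), le_refl _⟩
      simpa [Phi] using this
    have hod : ∀ i j : Fin n, i < j →
        (tB K n).repr x (j, i) = -(tB K n).repr x (i, j) := by
      intro i j hij
      have h2 := congrFun hx ⟨(i, j), le_of_lt hij⟩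
      have h3 : (tB K n).repr x (i, j) + (tB K n).repr x (j, i) = 0 := by
        simpa [Phi, ne_of_lt hij] using h2
      linear_combination h3
    set c : Fin n × Fin n → K := fun p => (tB K n).repr x p with hc
    set b : Fin n × Fin n → ((Fin n → K) ⊗[K] (Fin n → K)) := fun p => tB K n p with hb
    have hrepr : ∑ p : Fin n × Fin n, c p • b p = x := Module.Basis.sum_repr (tB K n) x
    rw [← hrepr]
    have h0 : ∑ p ∈ Finset.univ.filter (fun p : Fin n × Fin n => p.1 ≠ p.2), c p • b p
        = ∑ p : Fin n × Fin n, c p • b p := by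
      refine Finset.sum_filter_of_ne ?_
      intro p _ hne heq
      apply hne
      have hz : c p = 0 := by
        rw [hc]
        obtain ⟨p1, p2⟩ := p
        cases heq
        exact hd p1
      simp [hz]
    have h1 := Finset.sum_filter_add_sum_filter_not
      (Finset.univ.filter (fun p : Fin n × Fin n => p.1 ≠ p.2))
      (fun p : Fin n × Fin n => p.1 < p.2) (fun p => c p • b p)
    rw [Finset.filter_filter, Finset.filter_filter] at h1
    have e1 : Finset.univ.filter (fun p : Fin n × Fin n => p.1 ≠ p.2 ∧ p.1 < p.2)
        = Finset.univ.filter (fun p : Fin n × Fin n => p.1 < p.2) := by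
      ext p
      simp only [Finset.mem_filter, Finset.mem_univ, true_and, Ne, Fin.ext_iff, Fin.lt_def]
      omega
    have e2 : Finset.univ.filter (fun p : Fin n × Fin n => p.1 ≠ p.2 ∧ ¬ p.1 < p.2)
        = Finset.univ.filter (fun p : Fin n × Fin n => p.2 < p.1) := by
      ext p
      simp only [Finset.mem_filter, Finset.mem_univ, true_and, Ne, Fin.ext_iff, Fin.lt_def,
        not_lt]
      omega
    rw [e1, e2, h0] at h1
    have e3 : ∑ p ∈ Finset.univ.filter (fun p : Fin n × Fin n => p.2 < p.1), c p • b p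
        = ∑ p ∈ Finset.univ.filter (fun p : Fin n × Fin n => p.1 < p.2),
            (-(c p)) • b (p.2, p.1) := by
      refine Finset.sum_nbij' (fun p => (p.2, p.1)) (fun p => (p.2, p.1)) ?_ ?_ ?_ ?_ ?_
      · intro a ha; simpa using (Finset.mem_filter.mp ha).2
      · intro a ha; simpa using (Finset.mem_filter.mp ha).2
      · intro a _; rfl
      · intro a _; rfl
      · intro a ha
        have halt : a.2 < a.1 := by simpa using (Finset.mem_filter.mp ha).2
        have hcp : c a = -(c (a.2, a.1)) := by
          rw [hc]
          simpa using hod a.2 a.1 halt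
        rw [hcp]
    rw [← h1, e3, ← Finset.sum_add_distrib]
    refine Submodule.sum_mem _ ?_
    intro p hp
    obtain ⟨p1, p2⟩ := p
    have key : c (p1, p2) • b (p1, p2) + (-(c (p1, p2))) • b ((p1, p2).2, (p1, p2).1)
        = c (p1, p2) • (b (p1, p2) - b (p2, p1)) := by
      module
    rw [key]
    refine Submodule.smul_mem _ _ (Submodule.subset_span ?_)
    exact ⟨Pi.basisFun K (Fin n) p1, Pi.basisFun K (Fin n) p2,
      by simp [hb, tB, Module.Basis.tensorProduct_apply]⟩

lemma Phi_basis (n : ℕ) (s : UT n) : Phi K n (tB K n s.1) = Pi.single s 1 := by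
  obtain ⟨⟨i, j⟩, hij⟩ := s
  funext t
  obtain ⟨⟨k, l⟩, hkl⟩ := t
  simp only [Phi, LinearMap.coe_mk, AddHom.coe_mk, Module.Basis.repr_self, Finsupp.single_apply,
    Pi.single_apply, Subtype.mk.injEq, Prod.mk.injEq]
  have hij' : (i : ℕ) ≤ j := hij
  have hkl' : (k : ℕ) ≤ l := hkl
  simp only [Fin.ext_iff]
  split_ifs <;> first | omega | norm_num

lemma Phi_surj (n : ℕ) : Function.Surjective (Phi K n) := by
  intro g
  refine ⟨∑ s : UT n, g s • tB K n s.1, ?_⟩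
  rw [map_sum]
  have h1 : ∀ s : UT n, Phi K n (g s • tB K n s.1) = Pi.single s (g s) := by
    intro s
    rw [map_smul, Phi_basis, ← Pi.single_smul, smul_eq_mul, mul_one]
  simp_rw [h1]
  exact Finset.univ_sum_single g

def eps (n : ℕ) :
    (((Fin n → K) ⊗[K] (Fin n → K)) ⧸ symSubmodule K (Fin n → K)) ≃ₗ[K] (UT n → K) :=
  LinearEquiv.ofBijective
    (Submodule.liftQ _ (Phi K n) (le_of_eq (symSubmodule_eq_ker K n)))
    ⟨by rw [← LinearMap.ker_eq_bot]
        exact Submodule.ker_liftQ_eq_bot _ _ _ (le_of_eq (symSubmodule_eq_ker K n).symm),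
     fun g => by
      obtain ⟨x, hx⟩ := Phi_surj K n g
      exact ⟨Submodule.Quotient.mk x, by simpa [Submodule.liftQ_apply] using hx⟩⟩

lemma eps_mk (n : ℕ) (x : (Fin n → K) ⊗[K] (Fin n → K)) :
    eps K n (Submodule.Quotient.mk x) = Phi K n x := by
  exact Submodule.liftQ_apply (h := le_of_eq (symSubmodule_eq_ker K n)) _ _ x

lemma Phi_comp [CharP K 2] (n : ℕ) (x : (Fin n → K) ⊗[K] (Fin n → K)) :
    Phi K n (tensorSquareAction K n x) = Fmap K n (Phi K n x) := by
  induction x using TensorProduct.induction_on with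
  | zero => simp
  | add y z hy hz => simp only [map_add, hy, hz]
  | tmul v w =>
    funext s
    obtain ⟨⟨k, l⟩, hkl⟩ := s
    have hkl' : (k : ℕ) ≤ l := hkl
    have hl : (l : ℕ) < n := l.isLt
    have hk : (k : ℕ) < n := k.isLt
    set a : ℕ → K := fun m => if h : m < n then v ⟨m, h⟩ else 0 with ha
    set b : ℕ → K := fun m => if h : m < n then w ⟨m, h⟩ else 0 with hb
    have hJv : ∀ m : Fin n, jordanShift K n v m = a ((m : ℕ) + 1) := by
      intro m; by_cases h : (m : ℕ) + 1 < n <;> simp [jordanShift, ha, h]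
    have hJw : ∀ m : Fin n, jordanShift K n w m = b ((m : ℕ) + 1) := by
      intro m; by_cases h : (m : ℕ) + 1 < n <;> simp [jordanShift, hb, h]
    have hv : ∀ m : Fin n, v m = a (m : ℕ) := by
      intro m; simp [ha, m.isLt]
    have hw : ∀ m : Fin n, w m = b (m : ℕ) := by
      intro m; simp [hb, m.isLt]
    simp only [tensorSquareAction, LinearMap.add_apply, LinearMap.rTensor_tmul,
      LinearMap.lTensor_tmul, Phi, Fmap, LinearMap.coe_mk, AddHom.coe_mk, map_add,
      Finsupp.coe_add, Pi.add_apply, tB_repr_tmul]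
    simp only [hJv, hJw, hv, hw, Fin.ext_iff]
    split_ifs
    all_goals try (exfalso; omega)
    all_goals try ring1
    all_goals try rw [show (k : ℕ) + 1 = (l : ℕ) from by omega]
    all_goals try rw [show (k : ℕ) = (l : ℕ) from by omega]
    all_goals try ring1
    all_goals try simp only [ha, hb]
    all_goals try split_ifs
    all_goals try (exfalso; omega)
    all_goals try ring1
    all_goals simp only [Fin.eta]
    all_goals try ring1
    all_goals (ring_nf; simp [CharTwo.two_eq_zero]; try ring1)

lemma Fmap_ker_offdiag (n : ℕ) (d : UT n → K) (hd : Fmap K n d = 0) :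
    ∀ s : UT n, (s.1.1 : ℕ) < (s.1.2 : ℕ) → d s = 0 := by
  set D : ℕ → ℕ → K := fun i j =>
    if h : i ≤ j ∧ j < n then
      d ⟨(⟨i, by omega⟩, ⟨j, h.2⟩), by rw [Fin.le_def]; exact h.1⟩ else 0 with hD
  have hDs : ∀ s : UT n, d s = D (s.1.1 : ℕ) (s.1.2 : ℕ) := by
    rintro ⟨⟨k, l⟩, hkl⟩
    simp only [hD]
    rw [dif_pos ⟨(hkl : (k : ℕ) ≤ (l : ℕ)), l.isLt⟩]
  have heqn : ∀ i j : ℕ, i ≤ j → j < n →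
      (if i + 1 < j then D (i + 1) j else 0) + (if j + 1 < n then D i (j + 1) else 0) = 0 := by
    intro i j hij hjn
    have heq := congrFun hd ⟨(⟨i, by omega⟩, ⟨j, hjn⟩), by rw [Fin.le_def]; exact hij⟩
    simp only [Fmap, LinearMap.coe_mk, AddHom.coe_mk, Pi.zero_apply] at heq
    by_cases h1 : i + 1 < j <;> by_cases h2 : j + 1 < n
    · rw [dif_pos h1, dif_pos h2] at heq
      rw [if_pos h1, if_pos h2]
      simp only [hD]
      rw [dif_pos ⟨by omega, hjn⟩, dif_pos ⟨by omega, h2⟩]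
      exact heq
    · rw [dif_pos h1, dif_neg h2] at heq
      rw [if_pos h1, if_neg h2]
      simp only [hD]
      rw [dif_pos ⟨by omega, hjn⟩]
      exact heq
    · rw [dif_neg h1, dif_pos h2] at heq
      rw [if_neg h1, if_pos h2]
      simp only [hD]
      rw [dif_pos ⟨by omega, h2⟩]
      exact heq
    · rw [dif_neg h1, dif_neg h2] at heq
      rw [if_neg h1, if_neg h2]
      exact heq
  have main : ∀ m i j : ℕ, i < j → j < n → j - i = m → D i j = 0 := by
    intro m
    induction m using Nat.strong_induction_on with
    | _ m ih =>
      intro i j hij hjn hm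
      have h1 := heqn i (j - 1) (by omega) (by omega)
      rw [show (j - 1) + 1 = j from by omega, if_pos hjn] at h1
      by_cases h2 : i + 1 < j - 1
      · rw [if_pos h2] at h1
        have hz : D (i + 1) (j - 1) = 0 :=
          ih (j - 1 - (i + 1)) (by omega) (i + 1) (j - 1) h2 (by omega) rfl
        rw [hz, zero_add] at h1
        exact h1
      · rw [if_neg h2, zero_add] at h1
        exact h1
  rintro ⟨⟨k, l⟩, hkl⟩ hlt
  rw [hDs]
  exact main ((l : ℕ) - (k : ℕ)) (k : ℕ) (l : ℕ) hlt l.isLt rfl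

lemma Fmap_diag_mem (n : ℕ) (g : Fin n → K) :
    Fmap K n (fun s => if s.1.1 = s.1.2 then g s.1.1 else 0) = 0 := by
  funext s
  obtain ⟨⟨k, l⟩, hkl⟩ := s
  have hkl' : (k : ℕ) ≤ (l : ℕ) := hkl
  simp only [Fmap, LinearMap.coe_mk, AddHom.coe_mk, Pi.zero_apply, Fin.ext_iff]
  split_ifs <;> first | (exfalso; omega) | simp | omega

lemma finrank_ker_Fmap (n : ℕ) : Module.finrank K (LinearMap.ker (Fmap K n)) = n := by
  let ρ : (UT n → K) →ₗ[K] (Fin n → K) := LinearMap.funLeft K K (fun i => ⟨(i, i), le_refl _⟩)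
  let ρ' : LinearMap.ker (Fmap K n) →ₗ[K] (Fin n → K) :=
    ρ.comp (LinearMap.ker (Fmap K n)).subtype
  have hbij : Function.Bijective ρ' := by
    constructor
    · rintro ⟨d, hdmem⟩ ⟨e, hemem⟩ hde
      rw [LinearMap.mem_ker] at hdmem hemem
      have hfun : ∀ i : Fin n, d ⟨(i, i), le_refl _⟩ = e ⟨(i, i), le_refl _⟩ :=
        fun i => congrFun hde i
      apply Subtype.ext
      funext s
      obtain ⟨⟨k, l⟩, hkl⟩ := s
      show d ⟨(k, l), hkl⟩ = e ⟨(k, l), hkl⟩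
      rcases lt_or_eq_of_le hkl with hlt | heq
      · have hlt' : (k : ℕ) < (l : ℕ) := hlt
        rw [Fmap_ker_offdiag K n d hdmem ⟨(k, l), hkl⟩ hlt',
          Fmap_ker_offdiag K n e hemem ⟨(k, l), hkl⟩ hlt']
      · have hkl2 : k = l := heq
        subst hkl2
        exact hfun k
    · intro g
      refine ⟨⟨fun s => if s.1.1 = s.1.2 then g s.1.1 else 0,
        LinearMap.mem_ker.mpr (Fmap_diag_mem K n g)⟩, ?_⟩
      funext i
      simp [ρ', ρ, LinearMap.funLeft]
  have h := LinearEquiv.finrank_eq (LinearEquiv.ofBijective ρ' hbij)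
  rw [h, Module.finrank_pi, Fintype.card_fin]

lemma min_one_sum (N : Multiset ℕ) :
    (N.map fun s => min s 1).sum = Multiset.card (N.filter (0 < ·)) := by
  induction N using Multiset.induction_on with
  | empty => simp
  | cons a N ih =>
    by_cases ha : 0 < a
    · rw [Multiset.map_cons, Multiset.sum_cons,
        Multiset.filter_cons_of_pos _ (by simpa using ha), Multiset.card_cons, ih]
      omega
    · rw [Multiset.map_cons, Multiset.sum_cons,
        Multiset.filter_cons_of_neg _ (by simpa using ha), ih]
      omega

/-- The derivation action of the regular nilpotent `e` on `S²(W_n)` has exactly `n`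
Jordan blocks; equivalently, its kernel is `n`-dimensional. -/
theorem symmetricSquare_numBlocks [CharP K 2] (n : ℕ)
    (f : (((Fin n → K) ⊗[K] (Fin n → K)) ⧸ symSubmodule K (Fin n → K)) →ₗ[K]
        (((Fin n → K) ⊗[K] (Fin n → K)) ⧸ symSubmodule K (Fin n → K)))
    (hf : ∀ x, f (Submodule.Quotient.mk x) =
        Submodule.Quotient.mk (tensorSquareAction K n x)) :
    (∀ M : Multiset ℕ, HasJordanType f M → Multiset.card (M.filter (0 < ·)) = n) ∧
      Module.finrank K (LinearMap.ker f) = n := by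
  have hconj : ∀ q, eps K n (f q) = Fmap K n (eps K n q) := by
    intro q
    obtain ⟨x, rfl⟩ := Submodule.Quotient.mk_surjective _ q
    rw [hf, eps_mk, eps_mk, Phi_comp]
  have hmap : Submodule.map ((eps K n) : _ →ₗ[K] _) (LinearMap.ker f)
      = LinearMap.ker (Fmap K n) := by
    ext y
    simp only [Submodule.mem_map, LinearMap.mem_ker, LinearEquiv.coe_coe]
    constructor
    · rintro ⟨q, hq, rfl⟩
      rw [← hconj, hq, map_zero]
    · intro hy
      refine ⟨(eps K n).symm y, ?_, by simp⟩
      apply (eps K n).injective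
      rw [hconj, map_zero, LinearEquiv.apply_symm_apply, hy]
  have hker : Module.finrank K (LinearMap.ker f) = n := by
    have h1 := LinearEquiv.finrank_map_eq (eps K n) (LinearMap.ker f)
    rw [hmap] at h1
    rw [← h1, finrank_ker_Fmap]
  refine ⟨?_, hker⟩
  intro M hM
  have h1 := hM 1
  rw [pow_one, hker] at h1
  rw [← min_one_sum M, ← h1]


end
end

section
/- Let K be a field of characteristic 2 and let e : V → V be a nilpotent linear map on a finite-dimensional K-vector space V. Let e act on S²(V) and Λ²(V) as derivations, and let S²(V)^e denote the kernel of e on S²(V). If the subspace V^{[2]} spanned by {v² : v ∈ V} equals S²(V)^e, then Λ²(V) ≅ S²(V)/S²(V)^e as modules over the algebra generated by e; in particular, if e has Jordan blocks of sizes r_1, ..., r_t on S²(V), then e has Jordan blocks of sizes r_1 − 1, ..., r_t − 1 on Λ²(V) (blocks of size 0 being discarded). -/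
open TensorProduct

noncomputable section

variable (K : Type*) [Field K]

private lemma multisetSumAux (p : ℕ → Prop) [DecidablePred p] (hp : ∀ x, p x ↔ 0 < x)
    (M : Multiset ℕ) (m : ℕ) :
    (((M.map (fun s => s - 1)).filter p).map (fun s => min s m)).sum
      + (M.map fun s => min s 1).sum = (M.map fun s => min s (m + 1)).sum := by
  induction M using Multiset.induction with
  | empty => simp
  | cons a M ih =>
    by_cases h : p (a - 1)
    · rw [Multiset.map_cons, Multiset.filter_cons_of_pos _ h]
      simp only [Multiset.map_cons, Multiset.sum_cons]
      have h' := (hp _).1 h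
      omega
    · rw [Multiset.map_cons, Multiset.filter_cons_of_neg _ h]
      simp only [Multiset.map_cons, Multiset.sum_cons]
      have h' : ¬ (0 < a - 1) := fun hh => h ((hp _).2 hh)
      omega

/-- Let `e` be nilpotent on `V` in characteristic two, acting on `S²(V)` and `Λ²(V)`
(realized as quotients of `V ⊗ V`) as the derivation induced by `e`.  If the subspace
`V^{[2]}` spanned by the squares `v²` equals the kernel of `e` on `S²(V)`, then
`Λ²(V) ≅ S²(V)/S²(V)^e` compatibly with the actions; in particular the Jordan block
sizes of `e` on `Λ²(V)` are obtained from those on `S²(V)` by subtracting one from each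
(discarding blocks of size 0). -/
theorem exteriorSquare_iso_symmetricSquare_mod_kernel [CharP K 2]
    {V : Type*} [AddCommGroup V] [Module K V] [FiniteDimensional K V]
    (e : V →ₗ[K] V) (he : IsNilpotent e)
    (fS : ((V ⊗[K] V) ⧸ symSubmodule K V) →ₗ[K] ((V ⊗[K] V) ⧸ symSubmodule K V))
    (hfS : ∀ x, fS (Submodule.Quotient.mk x) =
        Submodule.Quotient.mk ((LinearMap.rTensor V e + LinearMap.lTensor V e) x))
    (fA : ((V ⊗[K] V) ⧸ altSubmodule K V) →ₗ[K] ((V ⊗[K] V) ⧸ altSubmodule K V))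
    (hfA : ∀ x, fA (Submodule.Quotient.mk x) =
        Submodule.Quotient.mk ((LinearMap.rTensor V e + LinearMap.lTensor V e) x))
    (hker : Submodule.map (symSubmodule K V).mkQ (altSubmodule K V) = LinearMap.ker fS) :
    (∃ φ : (((V ⊗[K] V) ⧸ symSubmodule K V) ⧸ LinearMap.ker fS) ≃ₗ[K]
        ((V ⊗[K] V) ⧸ altSubmodule K V),
      ∀ y, φ (Submodule.Quotient.mk (fS y)) = fA (φ (Submodule.Quotient.mk y))) ∧
    ∀ M : Multiset ℕ, HasJordanType fS M →
      HasJordanType fA ((M.map (fun s => s - 1)).filter (0 < ·)) := by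
  classical
  have hle : symSubmodule K V ≤ altSubmodule K V := by
    rw [symSubmodule, Submodule.span_le]
    rintro x ⟨v, w, rfl⟩
    have h2 : (-1 : K) = 1 := CharTwo.neg_eq 1
    have h1 : v ⊗ₜ[K] w - w ⊗ₜ[K] v
        = (v + w) ⊗ₜ[K] (v + w) - v ⊗ₜ[K] v - w ⊗ₜ[K] w := by
      rw [sub_eq_add_neg (v ⊗ₜ[K] w), ← neg_one_smul K (w ⊗ₜ[K] v), h2, one_smul]
      simp only [TensorProduct.tmul_add, TensorProduct.add_tmul]
      abel
    simp only [SetLike.mem_coe, altSubmodule]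
    rw [h1]
    exact sub_mem (sub_mem (Submodule.subset_span ⟨v + w, rfl⟩)
      (Submodule.subset_span ⟨v, rfl⟩)) (Submodule.subset_span ⟨w, rfl⟩)
  let φ : (((V ⊗[K] V) ⧸ symSubmodule K V) ⧸ LinearMap.ker fS) ≃ₗ[K]
      ((V ⊗[K] V) ⧸ altSubmodule K V) :=
    (Submodule.quotEquivOfEq _ _ hker.symm).trans
      (Submodule.quotientQuotientEquivQuotient (symSubmodule K V) (altSubmodule K V) hle)
  have hq : ∀ z : V ⊗[K] V,
      φ (Submodule.Quotient.mk (Submodule.Quotient.mk z)) = Submodule.Quotient.mk z := by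
    intro z
    simp only [φ, LinearEquiv.trans_apply, Submodule.quotEquivOfEq_mk]
    exact Submodule.quotientQuotientEquivQuotientAux_mk_mk _ _ hle z
  have hφ : ∀ y, φ (Submodule.Quotient.mk (fS y)) = fA (φ (Submodule.Quotient.mk y)) := by
    intro y
    obtain ⟨x, rfl⟩ := Submodule.mkQ_surjective _ y
    rw [Submodule.mkQ_apply, hfS, hq, hq, hfA]
  refine ⟨⟨φ, hφ⟩, ?_⟩
  intro M hM m
  -- iterate the intertwining relation
  have hφm : ∀ (n : ℕ) y, (fA ^ n) (φ (Submodule.Quotient.mk y))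
      = φ (Submodule.Quotient.mk ((fS ^ n) y)) := by
    intro n
    induction n with
    | zero => intro y; simp
    | succ n ih =>
      intro y
      rw [pow_succ, Module.End.mul_apply, ← hφ y, ih (fS y), pow_succ, Module.End.mul_apply]
  have hkle : LinearMap.ker fS ≤ LinearMap.ker (fS ^ (m + 1)) := by
    intro y hy
    simp only [LinearMap.mem_ker] at hy ⊢
    rw [pow_succ, Module.End.mul_apply, hy, map_zero]
  -- compute the kernel of fA ^ m
  have hkerA : LinearMap.ker (fA ^ m)
      = Submodule.map ((φ : _ →ₗ[K] _) ∘ₗ (LinearMap.ker fS).mkQ)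
          (LinearMap.ker (fS ^ (m + 1))) := by
    ext z
    constructor
    · intro hz
      obtain ⟨w, rfl⟩ := φ.surjective z
      obtain ⟨y, rfl⟩ := Submodule.mkQ_surjective _ w
      refine ⟨y, ?_, rfl⟩
      simp only [LinearMap.mem_ker] at hz ⊢
      rw [Submodule.mkQ_apply, hφm m y] at hz
      have h0 : (Submodule.Quotient.mk ((fS ^ m) y) :
          ((V ⊗[K] V) ⧸ symSubmodule K V) ⧸ LinearMap.ker fS) = 0 := by
        apply φ.injective; simpa using hz
      rw [Submodule.Quotient.mk_eq_zero] at h0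
      show (fS ^ (m + 1)) y = 0
      rw [pow_succ', Module.End.mul_apply]
      exact LinearMap.mem_ker.1 h0
    · rintro ⟨y, hy, rfl⟩
      simp only [LinearMap.mem_ker] at hy ⊢
      simp only [LinearMap.coe_comp, LinearEquiv.coe_coe, Function.comp_apply, Submodule.mkQ_apply]
      rw [hφm m y]
      have h0 : (fS ^ m) y ∈ LinearMap.ker fS := by
        simp only [LinearMap.mem_ker]
        rw [← Module.End.mul_apply, ← pow_succ']
        exact hy
      rw [(Submodule.Quotient.mk_eq_zero _).2 h0]
      simp
  -- dimension count
  have hrank : Module.finrank K (LinearMap.ker (fA ^ m))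
        + Module.finrank K (LinearMap.ker fS)
      = Module.finrank K (LinearMap.ker (fS ^ (m + 1))) := by
    rw [hkerA, Submodule.map_comp, LinearEquiv.finrank_map_eq]
    have h1 := LinearMap.finrank_range_add_finrank_ker
      ((LinearMap.ker fS).mkQ ∘ₗ (LinearMap.ker (fS ^ (m + 1))).subtype)
    rw [LinearMap.range_comp, Submodule.range_subtype, LinearMap.ker_comp,
      Submodule.ker_mkQ] at h1
    rw [(Submodule.comapSubtypeEquivOfLe hkle).finrank_eq] at h1
    exact h1
  have hsum := multisetSumAux (0 < ·) (fun _ => Iff.rfl) M m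
  have h1 := hM 1
  rw [pow_one] at h1
  have hm1 := hM (m + 1)
  rw [h1, hm1] at hrank
  omega

end
end

section
/- Let K be a field of characteristic 2, G a cyclic 2-group of order q with index-2 subgroup H, and U a finite-dimensional K[H]-module. Then there is an isomorphism of K[G]-modules S²(Ind_H^G U) ≅ Ind_H^G(S²(U)) ⊕ TenInd_H^G(U), where TenInd_H^G(U) is the tensor-induced module: as a K[H]-module it is U ⊗ U, and a generator g of G acts by g·(v ⊗ w) = g²w ⊗ v. -/
open TensorProduct

noncomputable section

variable (K : Type*) [Field K]

/-- Lemma of Gow–Laffey type in characteristic two: for `G = ⟨g⟩` cyclic of order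
`q = 2^α` and `H = ⟨g²⟩` its index-two subgroup, and `U` a `K[H]`-module (a space `U`
with an operator `h` satisfying `h^{q/2} = 1`), there is an isomorphism
`S²(Ind_H^G U) ≅ Ind_H^G (S² U) ⊕ TenInd_H^G U` of `K[G]`-modules.  Here:
* `Ind_H^G U` is realized as `U × U` with `g`-action `σ(v, w) = (h w, v)`;
* `S²(W)` is realized as `(W ⊗ W) ⧸ symSubmodule`, with the action induced by the
  diagonal action on `W ⊗ W` (`fS` for `W = Ind_H^G U`, `hS` for `W = U`);
* `Ind_H^G (S² U)` is `S²U × S²U` with `g`-action `τ(v, w) = (hS w, v)`;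
* the tensor-induced module `TenInd_H^G U` is `U ⊗ U` with `g`-action
  `t(v ⊗ w) = h w ⊗ v`;
and the isomorphism is an equivalence `φ` intertwining the `g`-actions. -/
theorem symmetricSquare_of_induced [CharP K 2] (q α : ℕ) (hα : 1 ≤ α) (hq : q = 2 ^ α)
    {U : Type*} [AddCommGroup U] [Module K U] [FiniteDimensional K U]
    (h : U →ₗ[K] U) (hh : h ^ (q / 2) = 1)
    (σ : (U × U) →ₗ[K] (U × U)) (hσ : ∀ v w : U, σ (v, w) = (h w, v))
    (fS : (((U × U) ⊗[K] (U × U)) ⧸ symSubmodule K (U × U)) →ₗ[K]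
        (((U × U) ⊗[K] (U × U)) ⧸ symSubmodule K (U × U)))
    (hfS : ∀ x, fS (Submodule.Quotient.mk x) =
        Submodule.Quotient.mk (TensorProduct.map σ σ x))
    (hS : ((U ⊗[K] U) ⧸ symSubmodule K U) →ₗ[K] ((U ⊗[K] U) ⧸ symSubmodule K U))
    (hhS : ∀ x, hS (Submodule.Quotient.mk x) =
        Submodule.Quotient.mk (TensorProduct.map h h x))
    (τ : (((U ⊗[K] U) ⧸ symSubmodule K U) × ((U ⊗[K] U) ⧸ symSubmodule K U)) →ₗ[K]
        (((U ⊗[K] U) ⧸ symSubmodule K U) × ((U ⊗[K] U) ⧸ symSubmodule K U)))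
    (hτ : ∀ v w, τ (v, w) = (hS w, v))
    (t : (U ⊗[K] U) →ₗ[K] (U ⊗[K] U)) (ht : ∀ v w : U, t (v ⊗ₜ[K] w) = h w ⊗ₜ[K] v) :
    ∃ φ : (((U × U) ⊗[K] (U × U)) ⧸ symSubmodule K (U × U)) ≃ₗ[K]
        ((((U ⊗[K] U) ⧸ symSubmodule K U) × ((U ⊗[K] U) ⧸ symSubmodule K U)) ×
          (U ⊗[K] U)),
      ∀ x, φ (fS x) = (LinearMap.prodMap τ t) (φ x) := by
  classical
  -- projections and inclusions
  set p1 := LinearMap.fst K U U with hp1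
  set p2 := LinearMap.snd K U U with hp2
  set i1 := LinearMap.inl K U U with hi1
  set i2 := LinearMap.inr K U U with hi2
  -- the forward map on the tensor square
  set Q1 := (symSubmodule K U).mkQ with hQ1
  set QW := (symSubmodule K (U × U)).mkQ with hQW
  set Psi0 : ((U × U) ⊗[K] (U × U)) →ₗ[K]
      ((((U ⊗[K] U) ⧸ symSubmodule K U) × ((U ⊗[K] U) ⧸ symSubmodule K U)) × (U ⊗[K] U)) :=
    ((Q1 ∘ₗ TensorProduct.map p1 p1).prod (Q1 ∘ₗ TensorProduct.map p2 p2)).prod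
      (TensorProduct.map p1 p2 +
        (TensorProduct.map p1 p2) ∘ₗ (TensorProduct.comm K (U × U) (U × U)).toLinearMap)
    with hPsi0
  have hPsi0_tmul : ∀ a b c d : U, Psi0 ((a, b) ⊗ₜ[K] (c, d)) =
      ((Q1 (a ⊗ₜ[K] c), Q1 (b ⊗ₜ[K] d)), a ⊗ₜ[K] d + c ⊗ₜ[K] b) := by
    intro a b c d
    simp [hPsi0, hp1, hp2, LinearMap.prod_apply, TensorProduct.map_tmul]
  have mkW_comm : ∀ x y : U × U, QW (x ⊗ₜ[K] y) = QW (y ⊗ₜ[K] x) := by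
    intro x y
    rw [hQW, Submodule.mkQ_apply, Submodule.mkQ_apply, Submodule.Quotient.eq]
    exact Submodule.subset_span ⟨x, y, rfl⟩
  have mkU_sub : ∀ v w : U, Q1 (v ⊗ₜ[K] w) = Q1 (w ⊗ₜ[K] v) := by
    intro v w
    rw [hQ1, Submodule.mkQ_apply, Submodule.mkQ_apply, Submodule.Quotient.eq]
    exact Submodule.subset_span ⟨v, w, rfl⟩
  have hker : symSubmodule K (U × U) ≤ LinearMap.ker Psi0 := by
    rw [symSubmodule, Submodule.span_le]
    rintro x ⟨⟨a, b⟩, ⟨c, d⟩, rfl⟩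
    simp only [SetLike.mem_coe, LinearMap.mem_ker, map_sub, hPsi0_tmul]
    have h1 : Q1 (a ⊗ₜ[K] c) = Q1 (c ⊗ₜ[K] a) := mkU_sub a c
    have h2 : Q1 (b ⊗ₜ[K] d) = Q1 (d ⊗ₜ[K] b) := mkU_sub b d
    rw [Prod.ext_iff, Prod.ext_iff]
    refine ⟨⟨?_, ?_⟩, ?_⟩ <;> simp [h1, h2, add_comm]
  set Psi := (symSubmodule K (U × U)).liftQ Psi0 hker with hPsi
  have hPsi_mk : ∀ x, Psi (Submodule.Quotient.mk x) = Psi0 x := fun x => rfl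
  -- the backward map
  have hker1 : symSubmodule K U ≤ LinearMap.ker (QW ∘ₗ TensorProduct.map i1 i1) := by
    rw [symSubmodule, Submodule.span_le]
    rintro x ⟨v, w, rfl⟩
    simp only [SetLike.mem_coe, LinearMap.mem_ker, map_sub, LinearMap.comp_apply,
      TensorProduct.map_tmul]
    rw [mkW_comm, sub_self]
  have hker2 : symSubmodule K U ≤ LinearMap.ker (QW ∘ₗ TensorProduct.map i2 i2) := by
    rw [symSubmodule, Submodule.span_le]
    rintro x ⟨v, w, rfl⟩
    simp only [SetLike.mem_coe, LinearMap.mem_ker, map_sub, LinearMap.comp_apply,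
      TensorProduct.map_tmul]
    rw [mkW_comm, sub_self]
  set j1 := (symSubmodule K U).liftQ (QW ∘ₗ TensorProduct.map i1 i1) hker1 with hj1
  set j2 := (symSubmodule K U).liftQ (QW ∘ₗ TensorProduct.map i2 i2) hker2 with hj2
  set j3 := QW ∘ₗ TensorProduct.map i1 i2 with hj3
  set Θ := (j1.coprod j2).coprod j3 with hΘ
  have hΘΨ : Θ ∘ₗ Psi = LinearMap.id := by
    apply Submodule.linearMap_qext
    apply TensorProduct.ext'
    rintro ⟨a, b⟩ ⟨c, d⟩
    simp only [LinearMap.comp_apply, Submodule.mkQ_apply, LinearMap.id_apply]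
    rw [hPsi_mk, hPsi0_tmul]
    simp only [hΘ, LinearMap.coprod_apply, hj1, hj2, hj3, hQ1, Submodule.mkQ_apply,
      Submodule.liftQ_apply, LinearMap.comp_apply, TensorProduct.map_tmul, map_add,
      LinearMap.inl_apply, LinearMap.inr_apply]
    have key : QW ((c, 0) ⊗ₜ[K] ((0 : U), b)) = QW (((0 : U), b) ⊗ₜ[K] (c, (0 : U))) :=
      mkW_comm _ _
    have expand : ((a, b) : U × U) ⊗ₜ[K] ((c, d) : U × U) =
        (a, (0:U)) ⊗ₜ[K] (c, (0:U)) + (a, (0:U)) ⊗ₜ[K] ((0:U), d) +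
        ((0:U), b) ⊗ₜ[K] (c, (0:U)) + ((0:U), b) ⊗ₜ[K] ((0:U), d) := by
      have h1 : ((a, b) : U × U) = (a, (0:U)) + ((0:U), b) := by simp
      have h2 : ((c, d) : U × U) = (c, (0:U)) + ((0:U), d) := by simp
      rw [h1, h2, TensorProduct.add_tmul, TensorProduct.tmul_add, TensorProduct.tmul_add]
      abel
    rw [show QW = (symSubmodule K (U × U)).mkQ from rfl] at key
    calc Submodule.Quotient.mk ((a, (0:U)) ⊗ₜ[K] (c, (0:U)))
          + Submodule.Quotient.mk (((0:U), b) ⊗ₜ[K] ((0:U), d))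
          + (Submodule.Quotient.mk ((a, (0:U)) ⊗ₜ[K] ((0:U), d))
            + Submodule.Quotient.mk ((c, (0:U)) ⊗ₜ[K] ((0:U), b)))
        = Submodule.Quotient.mk (((a, (0:U)) ⊗ₜ[K] (c, (0:U)) + (a, (0:U)) ⊗ₜ[K] ((0:U), d)
            + ((0:U), b) ⊗ₜ[K] (c, (0:U)) + ((0:U), b) ⊗ₜ[K] ((0:U), d) :
            (U × U) ⊗[K] (U × U))) := by
          rw [show (Submodule.Quotient.mk ((c, (0:U)) ⊗ₜ[K] ((0:U), b)) :
              ((U × U) ⊗[K] (U × U)) ⧸ symSubmodule K (U × U)) =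
              Submodule.Quotient.mk (((0:U), b) ⊗ₜ[K] (c, (0:U))) from key]
          simp only [← Submodule.Quotient.mk_add]
          congr 1
          abel
      _ = Submodule.Quotient.mk (((a, b) : U × U) ⊗ₜ[K] ((c, d) : U × U)) := by rw [← expand]
  have hΨΘ : Psi ∘ₗ Θ = LinearMap.id := by
    refine LinearMap.prod_ext (LinearMap.prod_ext ?_ ?_) ?_
    · apply Submodule.linearMap_qext
      apply TensorProduct.ext'
      intro v w
      simp only [LinearMap.comp_apply, LinearMap.coprod_apply, LinearMap.inl_apply,
        LinearMap.inr_apply, Submodule.mkQ_apply, hΘ, hj1, Submodule.liftQ_apply,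
        TensorProduct.map_tmul, hQW, hi1, LinearMap.id_coe, id_eq, map_zero, add_zero,
        LinearMap.id_apply]
      rw [hPsi_mk, hPsi0_tmul]
      simp [hQ1, Prod.ext_iff]
    · apply Submodule.linearMap_qext
      apply TensorProduct.ext'
      intro v w
      simp only [LinearMap.comp_apply, LinearMap.coprod_apply, LinearMap.inl_apply,
        LinearMap.inr_apply, Submodule.mkQ_apply, hΘ, hj2, Submodule.liftQ_apply,
        TensorProduct.map_tmul, hQW, hi2, LinearMap.id_coe, id_eq, map_zero, zero_add, add_zero,
        LinearMap.id_apply]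
      rw [hPsi_mk, hPsi0_tmul]
      simp [hQ1, Prod.ext_iff]
    · apply TensorProduct.ext'
      intro v w
      simp only [LinearMap.comp_apply, LinearMap.coprod_apply, LinearMap.inl_apply,
        LinearMap.inr_apply, Submodule.mkQ_apply, hΘ, hj3, TensorProduct.map_tmul,
        hQW, hi1, hi2, LinearMap.id_apply, map_zero, zero_add]
      rw [hPsi_mk, hPsi0_tmul]
      simp [hQ1, Prod.ext_iff]
  refine ⟨LinearEquiv.ofLinear Psi Θ hΨΘ hΘΨ, ?_⟩
  -- the intertwining property, proved as an equality of linear maps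
  have main : Psi ∘ₗ fS = (LinearMap.prodMap τ t) ∘ₗ Psi := by
    apply Submodule.linearMap_qext
    apply TensorProduct.ext'
    rintro ⟨a, b⟩ ⟨c, d⟩
    simp only [LinearMap.comp_apply, Submodule.mkQ_apply, LinearEquiv.coe_coe,
      LinearEquiv.ofLinear_apply]
    rw [hfS, TensorProduct.map_tmul, hσ, hσ, hPsi_mk, hPsi_mk, hPsi0_tmul, hPsi0_tmul]
    simp only [LinearMap.prodMap_apply, hτ, map_add, ht]
    have : hS (Q1 (b ⊗ₜ[K] d)) = Q1 (h b ⊗ₜ[K] h d) := by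
      rw [hQ1, Submodule.mkQ_apply, hhS, TensorProduct.map_tmul]
      rfl
    rw [this]
    exact Prod.ext rfl (add_comm _ _)
  intro x
  simp only [LinearEquiv.ofLinear_apply]
  exact LinearMap.congr_fun main x


end
end
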